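/- arXiv:1804.03387 — 6 statements merged into one kernel-verified Lean document; each statement's English description precedes it below -/
import Mathlib

section
/- Let q ∈ (0, 1/2) and let G : [0, 1] → ℝ be a continuous convex function with G ≥ 0. Then ∫₀¹ |G′(s)|^q ds ≤ (2(1 − q)/(1 − 2q)) · (∫₀¹ G(s) ds)^q, where G′ denotes the derivative of G, which exists at Lebesgue-almost every s ∈ (0, 1). -/
open MeasureTheory Filter Topology

namespace DerivFrac

open Set

variable {G : ℝ → ℝ}

/-- The right derivative of a convex function on `[0,1]`, as an infimum of slopes. -/
noncomputable def rd (G : ℝ → ℝ) (x : ℝ) : ℝ := sInf (slope G x '' Set.Ioo x 1)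

lemma slope_img_nonempty {x : ℝ} (hx : x ∈ Ioo (0:ℝ) 1) :
    (slope G x '' Ioo x 1).Nonempty :=
  ⟨_, Set.mem_image_of_mem _ (⟨by linarith [hx.1, hx.2], by linarith [hx.2]⟩ :
    (x+1)/2 ∈ Ioo x 1)⟩

lemma slope_bddBelow (hconv : ConvexOn ℝ (Icc 0 1) G) {x : ℝ} (hx : x ∈ Ioo (0:ℝ) 1) :
    BddBelow (slope G x '' Ioo x 1) := by
  refine ⟨slope G x 0, ?_⟩
  rintro z ⟨y, hy, rfl⟩
  exact hconv.slope_mono ⟨hx.1.le, hx.2.le⟩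
    ⟨⟨le_refl (0:ℝ), zero_le_one⟩, by simp [hx.1.ne]⟩
    ⟨⟨(hx.1.trans hy.1).le, hy.2.le⟩, by simp [hy.1.ne']⟩
    ((hx.1.trans hy.1).le)

lemma rd_le_slope (hconv : ConvexOn ℝ (Icc 0 1) G) {x y : ℝ} (hx : x ∈ Ioo (0:ℝ) 1)
    (hy : y ∈ Ioo x 1) : rd G x ≤ slope G x y := by
  unfold rd
  exact csInf_le (slope_bddBelow hconv hx) (Set.mem_image_of_mem _ hy)

lemma slope_le_rd (hconv : ConvexOn ℝ (Icc 0 1) G) {x w : ℝ} (hx : x ∈ Ioo (0:ℝ) 1)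
    (hw : w ∈ Icc (0:ℝ) 1) (hwx : w < x) : slope G x w ≤ rd G x := by
  unfold rd
  apply le_csInf (slope_img_nonempty hx)
  rintro z ⟨y, hy, rfl⟩
  exact hconv.slope_mono ⟨hx.1.le, hx.2.le⟩
    ⟨hw, by simp [hwx.ne]⟩
    ⟨⟨(hx.1.trans hy.1).le, hy.2.le⟩, by simp [hy.1.ne']⟩
    (hwx.le.trans hy.1.le)

lemma rd_mono (hconv : ConvexOn ℝ (Icc 0 1) G) : MonotoneOn (rd G) (Ioo (0:ℝ) 1) := by
  intro x hx y hy hxy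
  rcases eq_or_lt_of_le hxy with rfl | hxy
  · exact le_rfl
  calc rd G x ≤ slope G x y := rd_le_slope hconv hx ⟨hxy, hy.2⟩
    _ = slope G y x := slope_comm G x y
    _ ≤ rd G y := slope_le_rd hconv hy ⟨hx.1.le, hx.2.le⟩ hxy

lemma hasDerivWithinAt_rd (hconv : ConvexOn ℝ (Icc 0 1) G) {x : ℝ} (hx : x ∈ Ioo (0:ℝ) 1) :
    HasDerivWithinAt G (rd G x) (Set.Ioi x) x := by
  rw [hasDerivWithinAt_iff_tendsto_slope' notMem_Ioi_self]
  unfold rd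
  exact MonotoneOn.tendsto_nhdsWithin_Ioo_right
    ⟨(x+1)/2, ⟨by linarith [hx.1, hx.2], by linarith [hx.2]⟩⟩
    ((hconv.slope_mono ⟨hx.1.le, hx.2.le⟩).mono
      (fun y hy => ⟨⟨(hx.1.trans hy.1).le, hy.2.le⟩, by simp [hy.1.ne']⟩))
    (slope_bddBelow hconv hx)

lemma rd_nonneg (hconv : ConvexOn ℝ (Icc 0 1) G) {m x : ℝ}
    (hmono : MonotoneOn G (Icc m 1)) (hx : x ∈ Ioo m 1) (hx' : x ∈ Ioo (0:ℝ) 1) :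
    0 ≤ rd G x := by
  unfold rd
  apply le_csInf (slope_img_nonempty hx')
  rintro z ⟨y, hy, rfl⟩
  rw [slope_def_field]
  apply div_nonneg _ (by linarith [hy.1])
  have h : G x ≤ G y := hmono ⟨hx.1.le, hx'.2.le⟩
    ⟨hx.1.le.trans hy.1.le, hy.2.le⟩ hy.1.le
  linarith

lemma abs_deriv_le_rd (hconv : ConvexOn ℝ (Icc 0 1) G) {x : ℝ} (hx : x ∈ Ioo (0:ℝ) 1)
    (h0 : 0 ≤ rd G x) : |deriv G x| ≤ rd G x := by
  by_cases hd : DifferentiableAt ℝ G x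
  · have h1 : derivWithin G (Set.Ioi x) x = deriv G x :=
      (hd.hasDerivAt.hasDerivWithinAt).derivWithin (uniqueDiffWithinAt_Ioi x)
    have h2 : derivWithin G (Set.Ioi x) x = rd G x :=
      (hasDerivWithinAt_rd hconv hx).derivWithin (uniqueDiffWithinAt_Ioi x)
    rw [h1.symm.trans h2, abs_of_nonneg h0]
  · rw [deriv_zero_of_not_differentiableAt hd, abs_zero]
    exact h0

lemma key_parts (hconv : ConvexOn ℝ (Icc 0 1) G) (hcont : ContinuousOn G (Icc 0 1))
    {a b : ℝ} (ha : a ∈ Ioo (0:ℝ) 1) (hb : b ∈ Ioo (0:ℝ) 1) (hab : a < b) :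
    ∫ s in a..b, rd G s * (1 - s)
      = G b * (1 - b) - G a * (1 - a) + ∫ s in a..b, G s := by
  have hsub : Set.uIcc a b ⊆ Set.Icc (0:ℝ) 1 := by
    rw [Set.uIcc_of_le hab.le]
    exact Set.Icc_subset_Icc ha.1.le hb.2.le
  have hIoo : Set.Ioo (a ⊓ b) (a ⊔ b) ⊆ Set.Ioo (0:ℝ) 1 := by
    rw [inf_of_le_left hab.le, sup_of_le_right hab.le]
    exact Set.Ioo_subset_Ioo ha.1.le hb.2.le
  have hrdint : IntervalIntegrable (rd G) volume a b := by
    apply MonotoneOn.intervalIntegrable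
    apply (rd_mono hconv).mono
    rw [Set.uIcc_of_le hab.le]
    exact fun x hx => ⟨lt_of_lt_of_le ha.1 hx.1, lt_of_le_of_lt hx.2 hb.2⟩
  have hcont1 : ContinuousOn (fun s : ℝ => 1 - s) (Set.uIcc a b) :=
    (continuous_const.sub continuous_id).continuousOn
  have h := intervalIntegral.integral_deriv_mul_eq_sub_of_hasDeriv_right
      (u := G) (v := fun s => 1 - s) (u' := rd G) (v' := fun _ => (-1:ℝ))
      (hcont.mono hsub) hcont1
      (fun x hx => hasDerivWithinAt_rd hconv (hIoo hx))
      (fun x hx => (hasDerivWithinAt_id x (Set.Ioi x)).const_sub 1)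
      hrdint intervalIntegrable_const
  have h1 : IntervalIntegrable (fun x => rd G x * (1 - x)) volume a b :=
    hrdint.mul_continuousOn hcont1
  have h2 : IntervalIntegrable (fun x => G x * (-1:ℝ)) volume a b :=
    ((hcont.mono hsub).intervalIntegrable).mul_const _
  rw [intervalIntegral.integral_add h1 h2, intervalIntegral.integral_mul_const] at h
  linarith [h]

lemma key_bound (hconv : ConvexOn ℝ (Icc 0 1) G) (hcont : ContinuousOn G (Icc 0 1))
    (hnonneg : ∀ s ∈ Set.Icc (0:ℝ) 1, 0 ≤ G s) {m a b : ℝ}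
    (hm : m ∈ Icc (0:ℝ) 1) (hmono : MonotoneOn G (Icc m 1)) (hma : m ≤ a)
    (ha : a ∈ Ioo (0:ℝ) 1) (hb : b ∈ Ioo (0:ℝ) 1) (hab : a < b) :
    ∫ s in a..b, rd G s * (1 - s) ≤ ∫ s in Set.Icc (0:ℝ) 1, G s := by
  rw [key_parts hconv hcont ha hb hab]
  have hint2 : IntervalIntegrable G volume b 1 := by
    apply ContinuousOn.intervalIntegrable
    apply hcont.mono
    rw [Set.uIcc_of_le hb.2.le]
    exact Set.Icc_subset_Icc hb.1.le le_rfl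
  have hGb : G b * (1 - b) ≤ ∫ s in b..1, G s := by
    have h1 : ∫ s in b..1, G b ≤ ∫ s in b..1, G s := by
      apply intervalIntegral.integral_mono_on hb.2.le intervalIntegrable_const hint2
      intro s hs
      exact hmono ⟨hma.trans hab.le, hb.2.le⟩ ⟨(hma.trans hab.le).trans hs.1, hs.2⟩ hs.1
    simpa [intervalIntegral.integral_const, smul_eq_mul, mul_comm] using h1
  have hGa : 0 ≤ G a * (1 - a) :=
    mul_nonneg (hnonneg a ⟨ha.1.le, ha.2.le⟩) (by linarith [ha.2])
  have hint1 : IntervalIntegrable G volume a b := by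
    apply ContinuousOn.intervalIntegrable
    apply hcont.mono
    rw [Set.uIcc_of_le hab.le]
    exact Set.Icc_subset_Icc ha.1.le hb.2.le
  have hint0 : IntervalIntegrable G volume 0 a := by
    apply ContinuousOn.intervalIntegrable
    apply hcont.mono
    rw [Set.uIcc_of_le ha.1.le]
    exact Set.Icc_subset_Icc le_rfl ha.2.le
  have hint3 : IntervalIntegrable G volume a 1 := hint1.trans hint2
  have hsplit : (∫ s in a..b, G s) + ∫ s in b..1, G s = ∫ s in a..1, G s :=
    intervalIntegral.integral_add_adjacent_intervals hint1 hint2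
  have hsplit2 : (∫ s in (0:ℝ)..a, G s) + ∫ s in a..1, G s = ∫ s in (0:ℝ)..1, G s :=
    intervalIntegral.integral_add_adjacent_intervals hint0 hint3
  have h0a : 0 ≤ ∫ s in (0:ℝ)..a, G s :=
    intervalIntegral.integral_nonneg ha.1.le
      (fun u hu => hnonneg u ⟨hu.1, hu.2.trans ha.2.le⟩)
  have hIcc : ∫ s in Set.Icc (0:ℝ) 1, G s = ∫ s in (0:ℝ)..1, G s := by
    rw [MeasureTheory.integral_Icc_eq_integral_Ioc,
      ← intervalIntegral.integral_of_le zero_le_one]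
  linarith

lemma indicator_iUnion_sup (A : ℕ → Set ℝ) (f : ℝ → ENNReal) (x : ℝ) :
    (⋃ n, A n).indicator f x = ⨆ n, (A n).indicator f x := by
  refine le_antisymm ?_ (iSup_le fun n =>
    Set.indicator_le_indicator_of_subset (Set.subset_iUnion A n) (fun _ => zero_le) x)
  by_cases hx : x ∈ ⋃ n, A n
  · obtain ⟨n, hn⟩ := Set.mem_iUnion.1 hx
    rw [Set.indicator_of_mem hx]
    exact le_iSup_of_le n (le_of_eq (Set.indicator_of_mem hn f).symm)
  · rw [Set.indicator_of_notMem hx]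
    exact zero_le

lemma lintegral_piece (hconv : ConvexOn ℝ (Icc 0 1) G) (hcont : ContinuousOn G (Icc 0 1))
    (hnonneg : ∀ s ∈ Set.Icc (0:ℝ) 1, 0 ≤ G s) {m : ℝ} (hm : m ∈ Icc (0:ℝ) 1)
    (hmono : MonotoneOn G (Icc m 1)) :
    ∫⁻ s in Set.Ioo m 1, ENNReal.ofReal (|deriv G s| * (1 - s))
      ≤ ENNReal.ofReal (∫ s in Set.Icc (0:ℝ) 1, G s) := by
  rcases eq_or_lt_of_le hm.2 with hm1 | hm1
  · rw [hm1, Set.Ioo_self]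
    simp
  set Φ : ℝ → ENNReal := fun s => ENNReal.ofReal (|deriv G s| * (1 - s)) with hΦ
  have hΦm : Measurable Φ :=
    ((measurable_deriv G).abs.mul (measurable_const.sub measurable_id)).ennreal_ofReal
  set d : ℕ → ℝ := fun n => (1 - m)/(n + 2) with hd
  have hdpos : ∀ n, 0 < d n := fun n => div_pos (by linarith) (by positivity)
  set A : ℕ → Set ℝ := fun n => Set.Ioo (m + d n) (1 - d n) with hA
  have hdanti : ∀ i j : ℕ, i ≤ j → d j ≤ d i := by
    intro i j hij
    have hcast : ((i:ℝ)) ≤ (j:ℝ) := Nat.cast_le.2 hij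
    simp only [hd]
    rw [div_le_div_iff₀ (by positivity) (by positivity)]
    nlinarith
  have hAmono : Monotone A := by
    intro i j hij
    have := hdanti i j hij
    exact Set.Ioo_subset_Ioo (by linarith) (by linarith)
  have hAsub : ∀ n, A n ⊆ Set.Ioo m 1 := by
    intro n x hx
    have := hdpos n
    rw [hA] at hx
    exact ⟨by linarith [hx.1], by linarith [hx.2]⟩
  have hUnion : Set.Ioo m 1 ⊆ ⋃ n, A n := by
    intro x hx
    have hδ : 0 < min (x - m) (1 - x) := lt_min (by linarith [hx.1]) (by linarith [hx.2])
    obtain ⟨n, hn⟩ := exists_nat_gt ((1 - m)/min (x - m) (1 - x))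
    have hn2 : (1 - m)/min (x - m) (1 - x) < (n:ℝ) + 2 := by linarith [hn]
    have hkey : d n < min (x - m) (1 - x) := by
      rw [hd]
      rw [div_lt_iff₀ (by positivity)]
      rw [div_lt_iff₀ hδ] at hn2
      linarith [hn2]
    have hk1 : d n < x - m := lt_of_lt_of_le hkey (min_le_left _ _)
    have hk2 : d n < 1 - x := lt_of_lt_of_le hkey (min_le_right _ _)
    refine Set.mem_iUnion.2 ⟨n, ?_⟩
    rw [hA]
    exact ⟨by linarith, by linarith⟩
  have hper : ∀ n, ∫⁻ s in A n, Φ s ≤ ENNReal.ofReal (∫ s in Set.Icc (0:ℝ) 1, G s) := by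
    intro n
    rcases le_or_gt (1 - d n) (m + d n) with hba | hab
    · have hempty : A n = ∅ := by
        rw [hA]
        exact Set.Ioo_eq_empty (not_lt.2 hba)
      rw [hempty]
      simp
    · have hdn := hdpos n
      set a := m + d n with haa
      set b := 1 - d n with hbb
      have hma : m < a := by rw [haa]; linarith
      have hb1 : b < 1 := by rw [hbb]; linarith
      have ha0 : 0 < a := by rw [haa]; linarith [hm.1]
      have ha : a ∈ Set.Ioo (0:ℝ) 1 := ⟨ha0, lt_trans hab hb1⟩
      have hb : b ∈ Set.Ioo (0:ℝ) 1 := ⟨lt_trans ha.1 hab, hb1⟩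
      have hAab : A n = Set.Ioo a b := by rw [hA]
      set c : ℝ → ℝ := fun x => max a (min x b) with hc
      have hceq : ∀ x ∈ Set.Ioo a b, c x = x := by
        intro x hx
        rw [hc]
        simp only []
        rw [min_eq_left hx.2.le, max_eq_right hx.1.le]
      have hcmono : Monotone c := fun x y hxy =>
        max_le_max le_rfl (min_le_min hxy le_rfl)
      have hcmem : ∀ x, c x ∈ Set.Icc a b :=
        fun x => ⟨le_max_left _ _, max_le hab.le (min_le_right _ _)⟩
      have hIccsub : Set.Icc a b ⊆ Set.Ioo (0:ℝ) 1 :=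
        fun x hx => ⟨lt_of_lt_of_le ha.1 hx.1, lt_of_le_of_lt hx.2 hb.2⟩
      have hrdmono : MonotoneOn (rd G) (Set.Icc a b) := (rd_mono hconv).mono hIccsub
      have hrdcmono : Monotone fun x => rd G (c x) :=
        fun x y hxy => hrdmono (hcmem x) (hcmem y) (hcmono hxy)
      have hΨm : Measurable fun x => ENNReal.ofReal (rd G (c x) * (1 - x)) :=
        ((hrdcmono.measurable).mul (measurable_const.sub measurable_id)).ennreal_ofReal
      have hpt : ∀ x ∈ A n, Φ x ≤ ENNReal.ofReal (rd G (c x) * (1 - x)) := by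
        intro x hx
        have hxab : x ∈ Set.Ioo a b := by rwa [hAab] at hx
        have hx01 : x ∈ Set.Ioo (0:ℝ) 1 := hIccsub ⟨hxab.1.le, hxab.2.le⟩
        have hxm1 : x ∈ Set.Ioo m 1 := hAsub n hx
        have h0 : 0 ≤ rd G x := rd_nonneg hconv hmono hxm1 hx01
        have habs := abs_deriv_le_rd hconv hx01 h0
        rw [hceq x hxab]
        exact ENNReal.ofReal_le_ofReal
          (mul_le_mul_of_nonneg_right habs (by linarith [hx01.2]))
      have hintrd : IntervalIntegrable (fun x => rd G x * (1 - x)) volume a b := by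
        apply IntervalIntegrable.mul_continuousOn
        · apply MonotoneOn.intervalIntegrable
          rw [Set.uIcc_of_le hab.le]
          exact hrdmono
        · exact (continuous_const.sub continuous_id).continuousOn
      have hIntOn : IntegrableOn (fun x => rd G (c x) * (1 - x)) (Set.Ioo a b) := by
        apply IntegrableOn.congr_fun (hintrd.1.mono_set Set.Ioo_subset_Ioc_self)
          _ measurableSet_Ioo
        intro x hx
        simp only []
        rw [hceq x hx]
      have hae : 0 ≤ᵐ[volume.restrict (Set.Ioo a b)] fun x => rd G (c x) * (1 - x) := by
        filter_upwards [ae_restrict_mem measurableSet_Ioo] with x hx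
        have hcx : c x ∈ Set.Ioo m 1 :=
          ⟨lt_of_lt_of_le hma (hcmem x).1, lt_of_le_of_lt (hcmem x).2 hb1⟩
        have hcx01 : c x ∈ Set.Ioo (0:ℝ) 1 := hIccsub (hcmem x)
        exact mul_nonneg (rd_nonneg hconv hmono hcx hcx01) (by linarith [hx.2])
      calc ∫⁻ s in A n, Φ s
          ≤ ∫⁻ s in A n, ENNReal.ofReal (rd G (c s) * (1 - s)) :=
            setLIntegral_mono hΨm hpt
        _ = ENNReal.ofReal (∫ s in Set.Ioo a b, rd G (c s) * (1 - s)) := by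
            rw [hAab]
            exact (ofReal_integral_eq_lintegral_ofReal hIntOn hae).symm
        _ ≤ ENNReal.ofReal (∫ s in Set.Icc (0:ℝ) 1, G s) := by
            apply ENNReal.ofReal_le_ofReal
            have heq : ∫ s in Set.Ioo a b, rd G (c s) * (1 - s)
                = ∫ s in a..b, rd G s * (1 - s) := by
              rw [intervalIntegral.integral_of_le hab.le,
                ← setIntegral_congr_set Ioo_ae_eq_Ioc]
              apply setIntegral_congr_fun measurableSet_Ioo
              intro x hx
              simp only []
              rw [hceq x hx]
            rw [heq]
            exact key_bound hconv hcont hnonneg hm hmono hma.le ha hb hab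
  calc ∫⁻ s in Set.Ioo m 1, Φ s
      ≤ ∫⁻ s in ⋃ n, A n, Φ s := lintegral_mono_set hUnion
    _ = ⨆ n, ∫⁻ s in A n, Φ s := by
        rw [← lintegral_indicator (MeasurableSet.iUnion fun n => measurableSet_Ioo)]
        rw [lintegral_congr (indicator_iUnion_sup A Φ)]
        rw [lintegral_iSup (fun n => hΦm.indicator measurableSet_Ioo)
          (fun i j hij x => Set.indicator_le_indicator_of_subset (hAmono hij)
            (fun _ => zero_le) x)]
        refine iSup_congr fun n => ?_
        rw [lintegral_indicator measurableSet_Ioo]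
    _ ≤ ENNReal.ofReal (∫ s in Set.Icc (0:ℝ) 1, G s) := iSup_le hper

lemma measurePreserving_one_sub : MeasurePreserving (fun y : ℝ => 1 - y) volume volume := by
  have h : (fun y : ℝ => 1 - y) = (fun y : ℝ => 1 + y) ∘ (fun y : ℝ => -y) := by
    funext y
    simp [sub_eq_add_neg]
  rw [h]
  exact (measurePreserving_add_left volume 1).comp (Measure.measurePreserving_neg volume)

lemma lintegral_reflect (f : ℝ → ENNReal) (s : Set ℝ) :
    ∫⁻ x in (fun y : ℝ => 1 - y) ⁻¹' s, f (1 - x) = ∫⁻ x in s, f x :=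
  measurePreserving_one_sub.setLIntegral_comp_preimage_emb
    (Homeomorph.subLeft (1:ℝ)).measurableEmbedding f s

lemma convexOn_reflect (hconv : ConvexOn ℝ (Icc 0 1) G) :
    ConvexOn ℝ (Icc (0:ℝ) 1) (fun s => G (1 - s)) := by
  refine ⟨convex_Icc 0 1, fun x hx y hy a b ha hb hab => ?_⟩
  have hx' : 1 - x ∈ Icc (0:ℝ) 1 := ⟨by linarith [hx.2], by linarith [hx.1]⟩
  have hy' : 1 - y ∈ Icc (0:ℝ) 1 := ⟨by linarith [hy.2], by linarith [hy.1]⟩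
  have h1 : (1:ℝ) - (a • x + b • y) = a • (1 - x) + b • (1 - y) := by
    simp only [smul_eq_mul]
    linear_combination -1 * hab
  calc G (1 - (a • x + b • y)) = G (a • (1 - x) + b • (1 - y)) := by rw [h1]
    _ ≤ a • G (1 - x) + b • G (1 - y) := hconv.2 hx' hy' ha hb hab

lemma lintegral_piece_left (hconv : ConvexOn ℝ (Icc 0 1) G)
    (hcont : ContinuousOn G (Icc 0 1))
    (hnonneg : ∀ s ∈ Set.Icc (0:ℝ) 1, 0 ≤ G s) {m : ℝ} (hm : m ∈ Icc (0:ℝ) 1)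
    (hanti : AntitoneOn G (Icc 0 m)) :
    ∫⁻ s in Set.Ioo (0:ℝ) m, ENNReal.ofReal (|deriv G s| * s)
      ≤ ENNReal.ofReal (∫ s in Set.Icc (0:ℝ) 1, G s) := by
  have hcontH : ContinuousOn (fun s : ℝ => G (1 - s)) (Icc (0:ℝ) 1) := by
    have hf : ContinuousOn (fun s : ℝ => 1 - s) (Icc (0:ℝ) 1) :=
      (continuous_const.sub continuous_id).continuousOn
    refine ContinuousOn.comp hcont hf ?_
    intro x hx
    simp only [Set.mem_Icc] at hx ⊢
    constructor <;> linarith [hx.1, hx.2]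
  have hnonnegH : ∀ s ∈ Set.Icc (0:ℝ) 1, 0 ≤ G (1 - s) := by
    intro s hs
    exact hnonneg _ ⟨by linarith [hs.2], by linarith [hs.1]⟩
  have hmH : (1 - m) ∈ Icc (0:ℝ) 1 := ⟨by linarith [hm.2], by linarith [hm.1]⟩
  have hmonoH : MonotoneOn (fun s : ℝ => G (1 - s)) (Icc (1 - m) 1) := by
    intro x hx y hy hxy
    exact hanti ⟨by linarith [hy.2], by linarith [hy.1]⟩
      ⟨by linarith [hx.2], by linarith [hx.1]⟩ (by linarith)
  have h1 := lintegral_piece (convexOn_reflect hconv) hcontH hnonnegH hmH hmonoH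
  have hint : ∫ s in Set.Icc (0:ℝ) 1, G (1 - s) = ∫ s in Set.Icc (0:ℝ) 1, G s := by
    rw [MeasureTheory.integral_Icc_eq_integral_Ioc,
      MeasureTheory.integral_Icc_eq_integral_Ioc,
      ← intervalIntegral.integral_of_le zero_le_one,
      ← intervalIntegral.integral_of_le zero_le_one]
    simpa using intervalIntegral.integral_comp_sub_left (a := (0:ℝ)) (b := 1) G 1
  have hpre : (fun y : ℝ => 1 - y) ⁻¹' (Set.Ioo 0 m) = Set.Ioo (1 - m) 1 := by
    ext x
    simp only [Set.mem_preimage, Set.mem_Ioo]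
    constructor
    · rintro ⟨h1', h2'⟩; exact ⟨by linarith, by linarith⟩
    · rintro ⟨h1', h2'⟩; exact ⟨by linarith, by linarith⟩
  have h2 : ∫⁻ s in Set.Ioo (0:ℝ) m, ENNReal.ofReal (|deriv G s| * s)
      = ∫⁻ s in Set.Ioo (1 - m) 1,
          ENNReal.ofReal (|deriv (fun u : ℝ => G (1 - u)) s| * (1 - s)) := by
    rw [← lintegral_reflect (fun x => ENNReal.ofReal (|deriv G x| * x)) (Set.Ioo 0 m), hpre]
    apply lintegral_congr
    intro x
    rw [deriv_comp_const_sub, abs_neg]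
  rw [h2]
  rw [← hint]
  exact h1

lemma exists_min (hconv : ConvexOn ℝ (Icc 0 1) G) (hcont : ContinuousOn G (Icc 0 1)) :
    ∃ m ∈ Icc (0:ℝ) 1, MonotoneOn G (Icc m 1) ∧ AntitoneOn G (Icc 0 m) := by
  obtain ⟨m, hm, hmin⟩ := isCompact_Icc.exists_isMinOn (Set.nonempty_Icc.2 zero_le_one) hcont
  have hminle : ∀ y ∈ Icc (0:ℝ) 1, G m ≤ G y := fun y hy => hmin hy
  refine ⟨m, hm, ?_, ?_⟩
  · intro x hx y hy hxy
    rcases eq_or_lt_of_le hx.1 with heq | hmx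
    · rw [← heq]
      exact hminle y ⟨hm.1.trans hy.1, hy.2⟩
    · rcases eq_or_lt_of_le hxy with rfl | hxy
      · exact le_rfl
      have hym : 0 < y - m := by linarith
      have ha : 0 ≤ (y - x)/(y - m) := div_nonneg (by linarith) hym.le
      have hb : 0 < (x - m)/(y - m) := div_pos (by linarith) hym
      have hab : (y - x)/(y - m) + (x - m)/(y - m) = 1 := by
        rw [← add_div, div_eq_one_iff_eq hym.ne']
        ring
      have hcomb : ((y - x)/(y - m)) • m + ((x - m)/(y - m)) • y = x := by
        simp only [smul_eq_mul]
        field_simp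
        ring
      have h := hconv.2 hm ⟨hm.1.trans hy.1, hy.2⟩ ha hb.le hab
      rw [hcomb] at h
      simp only [smul_eq_mul] at h
      have hGm : G m ≤ G x := hminle x ⟨hm.1.trans hx.1, hx.2⟩
      have h3 : ((y - x)/(y - m)) * G m ≤ ((y - x)/(y - m)) * G x :=
        mul_le_mul_of_nonneg_left hGm ha
      have h4 : ((y - x)/(y - m) + (x - m)/(y - m)) * G x = 1 * G x := by rw [hab]
      have h2 : ((x - m)/(y - m)) * G x ≤ ((x - m)/(y - m)) * G y := by
        nlinarith [h, h3, h4]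
      exact le_of_mul_le_mul_left h2 hb
  · intro x hx y hy hxy
    rcases eq_or_lt_of_le hy.2 with heq | hym
    · rw [heq]
      exact hminle x ⟨hx.1, hx.2.trans hm.2⟩
    · rcases eq_or_lt_of_le hxy with rfl | hxy
      · exact le_rfl
      have hmx : 0 < m - x := by linarith
      have ha : 0 < (m - y)/(m - x) := div_pos (by linarith) hmx
      have hb : 0 ≤ (y - x)/(m - x) := div_nonneg (by linarith) hmx.le
      have hab : (m - y)/(m - x) + (y - x)/(m - x) = 1 := by
        rw [← add_div, div_eq_one_iff_eq hmx.ne']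
        ring
      have hcomb : ((m - y)/(m - x)) • x + ((y - x)/(m - x)) • m = y := by
        simp only [smul_eq_mul]
        field_simp
        ring
      have h := hconv.2 ⟨hx.1, hx.2.trans hm.2⟩ hm ha.le hb hab
      rw [hcomb] at h
      simp only [smul_eq_mul] at h
      have hGm : G m ≤ G y := hminle y ⟨hy.1, hy.2.trans hm.2⟩
      have h3 : ((y - x)/(m - x)) * G m ≤ ((y - x)/(m - x)) * G y :=
        mul_le_mul_of_nonneg_left hGm hb
      have h4 : ((m - y)/(m - x) + (y - x)/(m - x)) * G y = 1 * G y := by rw [hab]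
      have h2 : ((m - y)/(m - x)) * G y ≤ ((m - y)/(m - x)) * G x := by
        nlinarith [h, h3, h4]
      exact le_of_mul_le_mul_left h2 ha

lemma young {q a u K : ℝ} (hq0 : 0 < q) (hq1 : q < 1) (ha : 0 ≤ a) (hu : 0 < u)
    (hK : 0 < K) :
    a ^ q ≤ q / K * (a * u) + (1 - q) * (K / u) ^ (q / (1 - q)) := by
  have h1q : 0 < 1 - q := by linarith
  have hp₁0 : 0 ≤ a * u / K := by positivity
  have hp₂0 : 0 ≤ (K / u) ^ (q / (1 - q)) := Real.rpow_nonneg (by positivity) _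
  have key := Real.geom_mean_le_arith_mean2_weighted hq0.le h1q.le hp₁0 hp₂0
    (by ring : q + (1 - q) = 1)
  have hL : (a * u / K) ^ q * ((K / u) ^ (q / (1 - q))) ^ (1 - q) = a ^ q := by
    rw [← Real.rpow_mul (by positivity : (0:ℝ) ≤ K / u), div_mul_cancel₀ _ h1q.ne',
      ← Real.mul_rpow hp₁0 (by positivity)]
    congr 1
    field_simp
  have hR : q * (a * u / K) + (1 - q) * ((K / u) ^ (q / (1 - q)))
      = q / K * (a * u) + (1 - q) * (K / u) ^ (q / (1 - q)) := by ring
  rw [hL, hR] at key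
  exact key

lemma rpow_halfint {β : ℝ} (hβ0 : 0 < β) (hβ1 : β < 1) :
    ∫⁻ s in Set.Ioo (0:ℝ) (1/2), ENNReal.ofReal (s ^ (-β))
      ≤ ENNReal.ofReal (1 / (1 - β)) := by
  have hint : IntervalIntegrable (fun x : ℝ => x ^ (-β)) volume 0 (1/2) :=
    intervalIntegral.intervalIntegrable_rpow' (by linarith)
  have hii : IntegrableOn (fun x : ℝ => x ^ (-β)) (Set.Ioo (0:ℝ) (1/2)) :=
    hint.1.mono_set Set.Ioo_subset_Ioc_self
  have hae : 0 ≤ᵐ[volume.restrict (Set.Ioo (0:ℝ) (1/2))] fun x : ℝ => x ^ (-β) := by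
    filter_upwards [ae_restrict_mem measurableSet_Ioo] with x hx
    exact Real.rpow_nonneg hx.1.le _
  rw [← ofReal_integral_eq_lintegral_ofReal hii hae]
  apply ENNReal.ofReal_le_ofReal
  have heq : ∫ x in Set.Ioo (0:ℝ) (1/2), x ^ (-β) = ∫ x in (0:ℝ)..(1/2), x ^ (-β) := by
    rw [intervalIntegral.integral_of_le (by norm_num : (0:ℝ) ≤ 1/2),
      ← setIntegral_congr_set Ioo_ae_eq_Ioc]
  rw [heq, integral_rpow (Or.inl (by linarith : (-1:ℝ) < -β)),
    Real.zero_rpow (by linarith : -β + 1 ≠ 0), sub_zero]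
  have h3 : (0:ℝ) < -β + 1 := by linarith
  have h2 : ((1:ℝ)/2) ^ (-β + 1) ≤ 1 :=
    Real.rpow_le_one (by norm_num) (by norm_num) h3.le
  rw [div_le_div_iff₀ h3 (by linarith : (0:ℝ) < 1 - β)]
  nlinarith [h2, h3]

lemma min_rpow_bound {β : ℝ} (hβ0 : 0 < β) (hβ1 : β < 1) :
    ∫⁻ s in Set.Ioo (0:ℝ) 1, ENNReal.ofReal (min s (1 - s) ^ (-β))
      ≤ ENNReal.ofReal (2 * (1 / (1 - β))) := by
  have key := rpow_halfint hβ0 hβ1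
  have hsub : Set.Ioo (0:ℝ) 1 ⊆ Set.Ioc (0:ℝ) (1/2) ∪ Set.Ioo (1/2:ℝ) 1 := by
    intro x hx
    rcases le_or_gt x (1/2) with h | h
    · exact Or.inl ⟨hx.1, h⟩
    · exact Or.inr ⟨h, hx.2⟩
  calc ∫⁻ s in Set.Ioo (0:ℝ) 1, ENNReal.ofReal (min s (1 - s) ^ (-β))
      ≤ ∫⁻ s in Set.Ioc (0:ℝ) (1/2) ∪ Set.Ioo (1/2:ℝ) 1,
          ENNReal.ofReal (min s (1 - s) ^ (-β)) := lintegral_mono_set hsub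
    _ ≤ (∫⁻ s in Set.Ioc (0:ℝ) (1/2), ENNReal.ofReal (min s (1 - s) ^ (-β)))
        + ∫⁻ s in Set.Ioo (1/2:ℝ) 1, ENNReal.ofReal (min s (1 - s) ^ (-β)) :=
          lintegral_union_le _ _ _
    _ ≤ ENNReal.ofReal (1 / (1 - β)) + ENNReal.ofReal (1 / (1 - β)) := by
        refine add_le_add ?_ ?_
        · have h1 : ∫⁻ s in Set.Ioc (0:ℝ) (1/2), ENNReal.ofReal (min s (1 - s) ^ (-β))
              = ∫⁻ s in Set.Ioc (0:ℝ) (1/2), ENNReal.ofReal (s ^ (-β)) := by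
            apply setLIntegral_congr_fun measurableSet_Ioc
            intro x hx
            beta_reduce
            rw [min_eq_left (by linarith [hx.2] : x ≤ 1 - x)]
          rw [h1, setLIntegral_congr (Ioo_ae_eq_Ioc (a := (0:ℝ)) (b := 1/2)).symm]
          exact key
        · have hpre : (fun y : ℝ => 1 - y) ⁻¹' (Set.Ioo (0:ℝ) (1/2)) = Set.Ioo (1/2:ℝ) 1 := by
            ext x
            simp only [Set.mem_preimage, Set.mem_Ioo]
            constructor
            · rintro ⟨h1', h2'⟩; exact ⟨by linarith, by linarith⟩
            · rintro ⟨h1', h2'⟩; exact ⟨by linarith, by linarith⟩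
          have h2 : ∫⁻ s in Set.Ioo (1/2:ℝ) 1, ENNReal.ofReal (min s (1 - s) ^ (-β))
              = ∫⁻ s in Set.Ioo (1/2:ℝ) 1, ENNReal.ofReal ((1 - s) ^ (-β)) := by
            apply setLIntegral_congr_fun measurableSet_Ioo
            intro x hx
            beta_reduce
            rw [min_eq_right (by linarith [hx.1] : 1 - x ≤ x)]
          rw [h2, ← hpre,
            lintegral_reflect (fun x => ENNReal.ofReal (x ^ (-β))) (Set.Ioo (0:ℝ) (1/2))]
          exact key
    _ = ENNReal.ofReal (2 * (1 / (1 - β))) := by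
        rw [← ENNReal.ofReal_add (one_div_nonneg.2 (by linarith)) (one_div_nonneg.2 (by linarith))]
        congr 1
        ring

end DerivFrac

/-- Let `q ∈ (0, 1/2)` and let `G : [0,1] → ℝ` be continuous convex with
`G ≥ 0`. Then `∫₀¹ |G'(s)|^q ds ≤ (2(1-q)/(1-2q)) (∫₀¹ G(s) ds)^q`. -/
theorem derivative_fractional_moment_bound
    (q : ℝ) (hq : q ∈ Set.Ioo (0:ℝ) (1/2)) (G : ℝ → ℝ)
    (hcont : ContinuousOn G (Set.Icc 0 1))
    (hconv : ConvexOn ℝ (Set.Icc 0 1) G)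
    (hnonneg : ∀ s ∈ Set.Icc (0:ℝ) 1, 0 ≤ G s) :
    ∫⁻ s in Set.Icc (0:ℝ) 1, ENNReal.ofReal (|deriv G s| ^ q) ≤
      ENNReal.ofReal
        (2 * (1 - q) / (1 - 2 * q) * (∫ s in Set.Icc (0:ℝ) 1, G s) ^ q) := by
  obtain ⟨hq0, hq2⟩ := hq
  have hq1 : q < 1 := by linarith
  have h2q : 0 < 1 - 2*q := by linarith
  have h1q : 0 < 1 - q := by linarith
  obtain ⟨m, hm, hmono, hanti⟩ := DerivFrac.exists_min hconv hcont
  have hJ1 := DerivFrac.lintegral_piece hconv hcont hnonneg hm hmono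
  have hJ2 := DerivFrac.lintegral_piece_left hconv hcont hnonneg hm hanti
  set I := ∫ s in Set.Icc (0:ℝ) 1, G s with hI
  have hInn : 0 ≤ I := setIntegral_nonneg measurableSet_Icc hnonneg
  have hae_ne_m : ∀ᵐ (x : ℝ), x ≠ m := by
    rw [ae_iff]
    have hset : {x : ℝ | ¬ x ≠ m} = {m} := by ext x; simp
    rw [hset]
    exact measure_singleton m
  have hIcc0 : ∫⁻ s in Set.Icc (0:ℝ) 1, ENNReal.ofReal (|deriv G s| ^ q)
      = ∫⁻ s in Set.Ioo (0:ℝ) 1, ENNReal.ofReal (|deriv G s| ^ q) :=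
    (setLIntegral_congr (Ioo_ae_eq_Icc (a := (0:ℝ)) (b := 1))).symm
  rw [hIcc0]
  rcases eq_or_lt_of_le hInn with hI0 | hIpos
  · -- degenerate case : the integral of G vanishes
    have hz1 : ∫⁻ s in Set.Ioo m 1, ENNReal.ofReal (|deriv G s| * (1 - s)) = 0 := by
      refine le_antisymm ?_ zero_le
      rw [← hI0] at hJ1
      simpa using hJ1
    have hz2 : ∫⁻ s in Set.Ioo (0:ℝ) m, ENNReal.ofReal (|deriv G s| * s) = 0 := by
      refine le_antisymm ?_ zero_le
      rw [← hI0] at hJ2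
      simpa using hJ2
    have hmeas1 : Measurable fun s : ℝ => ENNReal.ofReal (|deriv G s| * (1 - s)) :=
      ((measurable_deriv G).abs.mul (measurable_const.sub measurable_id)).ennreal_ofReal
    have hmeas2 : Measurable fun s : ℝ => ENNReal.ofReal (|deriv G s| * s) :=
      ((measurable_deriv G).abs.mul measurable_id).ennreal_ofReal
    have h1ae := (ae_restrict_iff' measurableSet_Ioo).1
      ((lintegral_eq_zero_iff hmeas1).1 hz1)
    have h2ae := (ae_restrict_iff' measurableSet_Ioo).1
      ((lintegral_eq_zero_iff hmeas2).1 hz2)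
    have hzero : ∀ᵐ x ∂(volume.restrict (Set.Ioo (0:ℝ) 1)),
        ENNReal.ofReal (|deriv G x| ^ q) = 0 := by
      rw [ae_restrict_iff' measurableSet_Ioo]
      filter_upwards [h1ae, h2ae, hae_ne_m] with x hx1 hx2 hxm hx01
      have hd : |deriv G x| = 0 := by
        rcases lt_trichotomy x m with h | h | h
        · have h0 := hx2 ⟨hx01.1, h⟩
          simp only [Pi.zero_apply] at h0
          have hle : |deriv G x| * x ≤ 0 := ENNReal.ofReal_eq_zero.1 h0
          nlinarith [abs_nonneg (deriv G x), hx01.1]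
        · exact absurd h hxm
        · have h0 := hx1 ⟨h, hx01.2⟩
          simp only [Pi.zero_apply] at h0
          have hle : |deriv G x| * (1 - x) ≤ 0 := ENNReal.ofReal_eq_zero.1 h0
          nlinarith [abs_nonneg (deriv G x), hx01.2]
      rw [hd, Real.zero_rpow hq0.ne']
      exact ENNReal.ofReal_zero
    rw [lintegral_congr_ae hzero, lintegral_zero]
    exact zero_le
  · -- main case : the integral of G is positive
    set β : ℝ := q / (1 - q) with hβ
    have hβ0 : 0 < β := div_pos hq0 h1q
    have hβ1 : β < 1 := (div_lt_one h1q).2 (by linarith)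
    set K : ℝ := I ^ (1 - q) with hK
    have hKpos : 0 < K := Real.rpow_pos_of_pos hIpos _
    have hmder : Measurable fun s : ℝ => |deriv G s| := (measurable_deriv G).abs
    have hminm : Measurable fun s : ℝ => min s (1 - s) :=
      measurable_id.min (measurable_const.sub measurable_id)
    set g₁ : ℝ → ENNReal :=
      fun s => ENNReal.ofReal (q / K * (|deriv G s| * min s (1 - s))) with hg₁
    set g₂ : ℝ → ENNReal :=
      fun s => ENNReal.ofReal ((1 - q) * (K / min s (1 - s)) ^ β) with hg₂
    have hg₁m : Measurable g₁ :=
      (measurable_const.mul (hmder.mul hminm)).ennreal_ofReal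
    have hg₂m : Measurable g₂ :=
      (measurable_const.mul ((measurable_const.div hminm).pow measurable_const)).ennreal_ofReal
    have hpt : ∀ s ∈ Set.Ioo (0:ℝ) 1,
        ENNReal.ofReal (|deriv G s| ^ q) ≤ g₁ s + g₂ s := by
      intro s hs
      have hu : 0 < min s (1 - s) := lt_min hs.1 (by linarith [hs.2])
      have hy := DerivFrac.young hq0 hq1 (abs_nonneg (deriv G s)) hu hKpos
      calc ENNReal.ofReal (|deriv G s| ^ q)
          ≤ ENNReal.ofReal (q / K * (|deriv G s| * min s (1 - s))
              + (1 - q) * (K / min s (1 - s)) ^ β) := ENNReal.ofReal_le_ofReal hy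
        _ ≤ g₁ s + g₂ s := ENNReal.ofReal_add_le
    have hsplit : ∫⁻ s in Set.Ioo (0:ℝ) 1, ENNReal.ofReal (|deriv G s| ^ q)
        ≤ (∫⁻ s in Set.Ioo (0:ℝ) 1, g₁ s) + ∫⁻ s in Set.Ioo (0:ℝ) 1, g₂ s := by
      calc ∫⁻ s in Set.Ioo (0:ℝ) 1, ENNReal.ofReal (|deriv G s| ^ q)
          ≤ ∫⁻ s in Set.Ioo (0:ℝ) 1, (g₁ s + g₂ s) := setLIntegral_mono (hg₁m.add hg₂m) hpt
        _ = _ := lintegral_add_left hg₁m _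
    have hsplitset : ∫⁻ s in Set.Ioo (0:ℝ) 1, ENNReal.ofReal (|deriv G s| * min s (1 - s))
        ≤ ENNReal.ofReal I + ENNReal.ofReal I := by
      have hdiffsub : (Set.Ioo (0:ℝ) 1) \ {m} ⊆ Set.Ioo 0 m ∪ Set.Ioo m 1 := by
        rintro x ⟨hx, hxm⟩
        rcases lt_trichotomy x m with h | h | h
        · exact Or.inl ⟨hx.1, h⟩
        · exact absurd h (by simpa using hxm)
        · exact Or.inr ⟨h, hx.2⟩
      have haeset : ((Set.Ioo (0:ℝ) 1) \ {m} : Set ℝ) =ᵐ[volume] Set.Ioo (0:ℝ) 1 := by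
        refine Filter.eventuallyEq_set.2 ?_
        filter_upwards [hae_ne_m] with x hx
        simp [hx]
      calc ∫⁻ s in Set.Ioo (0:ℝ) 1, ENNReal.ofReal (|deriv G s| * min s (1 - s))
          = ∫⁻ s in (Set.Ioo (0:ℝ) 1) \ {m},
              ENNReal.ofReal (|deriv G s| * min s (1 - s)) :=
            (setLIntegral_congr haeset).symm
        _ ≤ ∫⁻ s in Set.Ioo (0:ℝ) m ∪ Set.Ioo m 1,
              ENNReal.ofReal (|deriv G s| * min s (1 - s)) := lintegral_mono_set hdiffsub
        _ ≤ (∫⁻ s in Set.Ioo (0:ℝ) m, ENNReal.ofReal (|deriv G s| * min s (1 - s)))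
            + ∫⁻ s in Set.Ioo m 1, ENNReal.ofReal (|deriv G s| * min s (1 - s)) :=
              lintegral_union_le _ _ _
        _ ≤ ENNReal.ofReal I + ENNReal.ofReal I := by
            refine add_le_add (le_trans ?_ hJ2) (le_trans ?_ hJ1)
            · refine setLIntegral_mono (hmder.mul measurable_id).ennreal_ofReal
                fun x hx => ENNReal.ofReal_le_ofReal ?_
              exact mul_le_mul_of_nonneg_left (min_le_left _ _) (abs_nonneg _)
            · refine setLIntegral_mono
                (hmder.mul (measurable_const.sub measurable_id)).ennreal_ofReal
                fun x hx => ENNReal.ofReal_le_ofReal ?_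
              exact mul_le_mul_of_nonneg_left (min_le_right _ _) (abs_nonneg _)
    have hg₁b : ∫⁻ s in Set.Ioo (0:ℝ) 1, g₁ s ≤ ENNReal.ofReal (q / K * (I + I)) := by
      have heq : ∀ s : ℝ, g₁ s
          = ENNReal.ofReal (q / K) * ENNReal.ofReal (|deriv G s| * min s (1 - s)) := by
        intro s
        rw [hg₁]
        rw [← ENNReal.ofReal_mul (by positivity)]
      calc ∫⁻ s in Set.Ioo (0:ℝ) 1, g₁ s
          = ∫⁻ s in Set.Ioo (0:ℝ) 1,
              ENNReal.ofReal (q / K) * ENNReal.ofReal (|deriv G s| * min s (1 - s)) :=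
            lintegral_congr heq
        _ = ENNReal.ofReal (q / K)
            * ∫⁻ s in Set.Ioo (0:ℝ) 1, ENNReal.ofReal (|deriv G s| * min s (1 - s)) :=
            lintegral_const_mul' _ _ ENNReal.ofReal_ne_top
        _ ≤ ENNReal.ofReal (q / K) * (ENNReal.ofReal I + ENNReal.ofReal I) :=
            mul_le_mul_right hsplitset _
        _ = ENNReal.ofReal (q / K * (I + I)) := by
            rw [← ENNReal.ofReal_add hInn hInn, ← ENNReal.ofReal_mul (by positivity)]
    have hg₂b : ∫⁻ s in Set.Ioo (0:ℝ) 1, g₂ s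
        ≤ ENNReal.ofReal ((1 - q) * K ^ β * (2 * (1 / (1 - β)))) := by
      have hKβnn : 0 ≤ (1 - q) * K ^ β := mul_nonneg h1q.le (Real.rpow_nonneg hKpos.le _)
      have hcong : ∫⁻ s in Set.Ioo (0:ℝ) 1, g₂ s
          = ∫⁻ s in Set.Ioo (0:ℝ) 1,
              ENNReal.ofReal ((1 - q) * K ^ β)
                * ENNReal.ofReal (min s (1 - s) ^ (-β)) := by
        apply setLIntegral_congr_fun measurableSet_Ioo
        intro x hx
        have hu : 0 < min x (1 - x) := lt_min hx.1 (by linarith [hx.2])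
        rw [hg₂]
        simp only []
        rw [Real.div_rpow hKpos.le hu.le, Real.rpow_neg hu.le,
          ← ENNReal.ofReal_mul hKβnn]
        congr 1
        rw [div_eq_mul_inv]
        ring
      rw [hcong, lintegral_const_mul' _ _ ENNReal.ofReal_ne_top]
      calc ENNReal.ofReal ((1 - q) * K ^ β)
            * ∫⁻ s in Set.Ioo (0:ℝ) 1, ENNReal.ofReal (min s (1 - s) ^ (-β))
          ≤ ENNReal.ofReal ((1 - q) * K ^ β) * ENNReal.ofReal (2 * (1 / (1 - β))) :=
            mul_le_mul_right (DerivFrac.min_rpow_bound hβ0 hβ1) _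
        _ = ENNReal.ofReal ((1 - q) * K ^ β * (2 * (1 / (1 - β)))) := by
            rw [← ENNReal.ofReal_mul hKβnn]
    -- final real arithmetic
    have hKβ : K ^ β = I ^ q := by
      rw [hK, ← Real.rpow_mul hInn]
      congr 1
      rw [hβ, mul_comm, div_mul_cancel₀ _ h1q.ne']
    have hII : I = I ^ q * I ^ (1 - q) := by
      rw [← Real.rpow_add hIpos, show q + (1 - q) = 1 by ring, Real.rpow_one]
    have hIK : q / K * (I + I) = 2 * q * I ^ q := by
      rw [hK, div_mul_eq_mul_div, div_eq_iff (Real.rpow_pos_of_pos hIpos (1 - q)).ne']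
      linear_combination (2 * q) * hII
    have hr1 : 1 ≤ (1 - q) / (1 - 2 * q) := by
      rw [le_div_iff₀ h2q]
      linarith
    have hIq : 0 ≤ I ^ q := Real.rpow_nonneg hInn q
    have h1β : 1 / (1 - β) = (1 - q) / (1 - 2 * q) := by
      have hb : 1 - β = (1 - 2*q)/(1 - q) := by
        rw [hβ]
        field_simp
        ring
      rw [hb, one_div_div]
    have hfinal : q / K * (I + I) + (1 - q) * K ^ β * (2 * (1 / (1 - β)))
        ≤ 2 * (1 - q) / (1 - 2 * q) * I ^ q := by
      rw [hIK, hKβ, h1β, mul_div_assoc]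
      nlinarith [mul_nonneg (mul_nonneg hq0.le hIq) (sub_nonneg.2 hr1)]
    have hsum1 : 0 ≤ q / K * (I + I) := by positivity
    have hsum2 : 0 ≤ (1 - q) * K ^ β * (2 * (1 / (1 - β))) :=
      mul_nonneg (mul_nonneg h1q.le (Real.rpow_nonneg hKpos.le _))
        (mul_nonneg (by norm_num) (one_div_nonneg.2 (by linarith)))
    calc ∫⁻ s in Set.Ioo (0:ℝ) 1, ENNReal.ofReal (|deriv G s| ^ q)
        ≤ (∫⁻ s in Set.Ioo (0:ℝ) 1, g₁ s) + ∫⁻ s in Set.Ioo (0:ℝ) 1, g₂ s := hsplit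
      _ ≤ ENNReal.ofReal (q / K * (I + I))
          + ENNReal.ofReal ((1 - q) * K ^ β * (2 * (1 / (1 - β)))) := add_le_add hg₁b hg₂b
      _ = ENNReal.ofReal (q / K * (I + I) + (1 - q) * K ^ β * (2 * (1 / (1 - β)))) :=
          (ENNReal.ofReal_add hsum1 hsum2).symm
      _ ≤ ENNReal.ofReal (2 * (1 - q) / (1 - 2 * q) * I ^ q) :=
          ENNReal.ofReal_le_ofReal hfinal
end

section
/- Let n ≥ 1 be an integer and for λ > 0 set I(λ) = ∫₀¹ (t^{n−1} + λ^{−1}) · log(1 + λ^{−1} t^{−(n−1)}) dt. Then for every real x with 0 < x ≤ 1/e, setting λ_x = (n + 3) · x · log(1/x), one has x · I(λ_x) < 1. -/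
open MeasureTheory Real

set_option maxHeartbeats 1000000

lemma aux_integral_bound (n : ℕ) (hn : 1 ≤ n) (b : ℝ) (hb : 0 < b) :
    (∫ t in Set.Ioc (0:ℝ) 1, (t ^ (n - 1) + b) * Real.log (1 + b * (t ^ (n - 1))⁻¹))
      ≤ b * (1 + Real.log (1 + b)) + b * ((n:ℝ) - 1) * ((n:ℝ) + 1) / (n:ℝ) := by
  have hn1 : (1:ℝ) ≤ (n:ℝ) := by exact_mod_cast hn
  obtain ⟨r, hrdef⟩ : ∃ r : ℝ, r = -(((n:ℝ) + 1)⁻¹) := ⟨_, rfl⟩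
  have hinvn : (0:ℝ) < ((n:ℝ) + 1)⁻¹ := by positivity
  have hinvn1 : ((n:ℝ) + 1)⁻¹ < 1 := by
    rw [inv_lt_one_iff₀]; right; linarith
  have hr : -1 < r := by rw [hrdef]; linarith
  have hr0 : r < 0 := by rw [hrdef]; linarith
  have hr1 : 0 < r + 1 := by linarith
  obtain ⟨d, hddef⟩ : ∃ d : ℝ, d = b * ((n:ℝ) - 1) * ((n:ℝ) + 1) := ⟨_, rfl⟩
  have hd0 : 0 ≤ d := by rw [hddef]; have : (0:ℝ) ≤ (n:ℝ) - 1 := by linarith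
                         positivity
  obtain ⟨c, hcdef⟩ : ∃ c : ℝ, c = b + b * Real.log (1 + b) - d := ⟨_, rfl⟩
  have hmr : ((n - 1 : ℕ) : ℝ) = (n:ℝ) - 1 := by
    rw [Nat.cast_sub hn, Nat.cast_one]
  have hm0 : (0:ℝ) ≤ ((n - 1 : ℕ) : ℝ) := by rw [hmr]; linarith
  -- pointwise bound
  have hfg : ∀ t ∈ Set.Ioc (0:ℝ) 1,
      (t ^ (n - 1) + b) * Real.log (1 + b * (t ^ (n - 1))⁻¹) ≤ c + d * t ^ r := by
    intro t ht
    obtain ⟨ht0, ht1⟩ := ht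
    obtain ⟨a, hadef⟩ : ∃ a : ℝ, a = t ^ (n - 1) := ⟨_, rfl⟩
    have ha : 0 < a := hadef ▸ pow_pos ht0 _
    have ha1 : a ≤ 1 := hadef ▸ pow_le_one₀ ht0.le ht1
    have hab : (1:ℝ) + b * a⁻¹ = (a + b) / a := by field_simp
    have hS : Real.log (1 + b * a⁻¹) = Real.log (a + b) - Real.log a := by
      rw [hab, Real.log_div (by positivity) ha.ne']
    have hlog1 : Real.log ((a + b) / a) ≤ (a + b) / a - 1 :=
      Real.log_le_sub_one_of_pos (by positivity)
    have h1 : a * (Real.log (a + b) - Real.log a) ≤ b := by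
      have heq : Real.log (a + b) - Real.log a = Real.log ((a + b) / a) := by
        rw [Real.log_div (by positivity) ha.ne']
      rw [heq]
      calc a * Real.log ((a + b) / a) ≤ a * ((a + b) / a - 1) :=
            mul_le_mul_of_nonneg_left hlog1 ha.le
        _ = b := by field_simp; ring
    -- -log t ≤ (n+1) * (t^r - 1)
    have hlt : -Real.log t ≤ ((n:ℝ) + 1) * (t ^ r - 1) := by
      have h := Real.log_le_sub_one_of_pos (Real.rpow_pos_of_pos ht0 r)
      rw [Real.log_rpow ht0] at h
      have h2 := mul_le_mul_of_nonneg_left h (by linarith : (0:ℝ) ≤ (n:ℝ) + 1)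
      have hnr : ((n:ℝ) + 1) * r = -1 := by
        rw [hrdef]; field_simp
      calc -Real.log t = (((n:ℝ) + 1) * r) * Real.log t := by rw [hnr]; ring
        _ = ((n:ℝ) + 1) * (r * Real.log t) := by ring
        _ ≤ ((n:ℝ) + 1) * (t ^ r - 1) := h2
    have h2 : Real.log (a + b) - Real.log a
        ≤ Real.log (1 + b) + ((n:ℝ) - 1) * (((n:ℝ) + 1) * (t ^ r - 1)) := by
      have hla : Real.log a = ((n - 1 : ℕ) : ℝ) * Real.log t := by
        rw [hadef, Real.log_pow]
      have hlab : Real.log (a + b) ≤ Real.log (1 + b) :=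
        Real.log_le_log (by positivity) (by linarith)
      have hml : ((n - 1 : ℕ) : ℝ) * (-Real.log t)
          ≤ ((n - 1 : ℕ) : ℝ) * (((n:ℝ) + 1) * (t ^ r - 1)) :=
        mul_le_mul_of_nonneg_left hlt hm0
      rw [hla, hmr] at *
      nlinarith
    have hS0 : 0 ≤ Real.log (a + b) - Real.log a := by
      rw [← hS]
      exact Real.log_nonneg (by nlinarith [mul_pos hb (inv_pos.mpr ha)])
    have hexpand : (t ^ (n - 1) + b) * Real.log (1 + b * (t ^ (n - 1))⁻¹)
        = a * (Real.log (a + b) - Real.log a) + b * (Real.log (a + b) - Real.log a) := by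
      rw [← hadef, hS]; ring
    rw [hexpand]
    have h3 : b * (Real.log (a + b) - Real.log a)
        ≤ b * (Real.log (1 + b) + ((n:ℝ) - 1) * (((n:ℝ) + 1) * (t ^ r - 1))) :=
      mul_le_mul_of_nonneg_left h2 hb.le
    have hcd : c + d * t ^ r
        = b + b * Real.log (1 + b) + d * (t ^ r - 1) := by rw [hcdef]; ring
    rw [hcd, hddef]
    nlinarith
  -- nonnegativity of integrand
  have hf0 : ∀ t ∈ Set.Ioc (0:ℝ) 1,
      0 ≤ (t ^ (n - 1) + b) * Real.log (1 + b * (t ^ (n - 1))⁻¹) := by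
    intro t ht
    obtain ⟨ht0, _⟩ := ht
    have ha : (0:ℝ) < t ^ (n - 1) := pow_pos ht0 _
    apply mul_nonneg (by positivity)
    apply Real.log_nonneg
    nlinarith [mul_pos hb (inv_pos.mpr ha)]
  -- integrability
  have hrint : IntegrableOn (fun t : ℝ => t ^ r) (Set.Ioc (0:ℝ) 1) := by
    have := intervalIntegral.intervalIntegrable_rpow' (a := 0) (b := 1) hr
    rwa [intervalIntegrable_iff_integrableOn_Ioc_of_le zero_le_one] at this
  have hconst : IntegrableOn (fun _ : ℝ => c) (Set.Ioc (0:ℝ) 1) :=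
    integrableOn_const measure_Ioc_lt_top.ne
  have hgint : IntegrableOn (fun t : ℝ => c + d * t ^ r) (Set.Ioc (0:ℝ) 1) :=
    hconst.add (hrint.const_mul d)
  have hfmeas : AEStronglyMeasurable
      (fun t : ℝ => (t ^ (n - 1) + b) * Real.log (1 + b * (t ^ (n - 1))⁻¹))
      (volume.restrict (Set.Ioc (0:ℝ) 1)) := by
    apply Measurable.aestronglyMeasurable
    measurability
  have hfint : IntegrableOn
      (fun t : ℝ => (t ^ (n - 1) + b) * Real.log (1 + b * (t ^ (n - 1))⁻¹))
      (Set.Ioc (0:ℝ) 1) := by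
    apply hgint.mono' hfmeas
    filter_upwards [ae_restrict_mem measurableSet_Ioc] with t ht
    rw [Real.norm_eq_abs, abs_of_nonneg (hf0 t ht)]
    exact hfg t ht
  have hle : (∫ t in Set.Ioc (0:ℝ) 1, (t ^ (n - 1) + b) * Real.log (1 + b * (t ^ (n - 1))⁻¹))
      ≤ ∫ t in Set.Ioc (0:ℝ) 1, (c + d * t ^ r) :=
    setIntegral_mono_on hfint hgint measurableSet_Ioc hfg
  have hrval : (∫ t in Set.Ioc (0:ℝ) 1, t ^ r) = 1 / (r + 1) := by
    rw [← intervalIntegral.integral_of_le zero_le_one, integral_rpow (Or.inl hr),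
      Real.one_rpow, Real.zero_rpow hr1.ne']
    ring
  have hgval : (∫ t in Set.Ioc (0:ℝ) 1, (c + d * t ^ r)) = c + d * (1 / (r + 1)) := by
    rw [integral_add hconst (hrint.const_mul d), MeasureTheory.integral_const_mul, hrval,
      setIntegral_const, Real.volume_real_Ioc]
    norm_num
  have hrr : 1 / (r + 1) = ((n:ℝ) + 1) / (n:ℝ) := by
    rw [hrdef, div_eq_div_iff (by linarith) (by linarith)]
    field_simp
    ring
  have hfinal : c + d * (1 / (r + 1))
      = b * (1 + Real.log (1 + b)) + b * ((n:ℝ) - 1) * ((n:ℝ) + 1) / (n:ℝ) := by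
    rw [hrr, hcdef, hddef]
    field_simp
    ring
  calc (∫ t in Set.Ioc (0:ℝ) 1, (t ^ (n - 1) + b) * Real.log (1 + b * (t ^ (n - 1))⁻¹))
      ≤ ∫ t in Set.Ioc (0:ℝ) 1, (c + d * t ^ r) := hle
    _ = c + d * (1 / (r + 1)) := hgval
    _ = _ := hfinal

/-- For an integer `n ≥ 1` and
`I(λ) = ∫₀¹ (t^{n-1} + λ⁻¹) log(1 + λ⁻¹ t^{-(n-1)}) dt`, for every `0 < x ≤ 1/e`, with
`λ_x = (n+3) x log(1/x)`, one has `x · I(λ_x) < 1`. -/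
theorem lambda_x_integral_bound
    (n : ℕ) (hn : 1 ≤ n) (x : ℝ) (hx : 0 < x) (hx' : x ≤ 1 / Real.exp 1) :
    x * ∫ t in Set.Ioc (0:ℝ) 1,
        (t ^ (n - 1) + (((n : ℝ) + 3) * x * Real.log (1 / x))⁻¹) *
          Real.log (1 + (((n : ℝ) + 3) * x * Real.log (1 / x))⁻¹ * (t ^ (n - 1))⁻¹)
      < 1 := by
  have hn1 : (1:ℝ) ≤ (n:ℝ) := by exact_mod_cast hn
  obtain ⟨L, hLdef⟩ : ∃ L : ℝ, L = Real.log (1 / x) := ⟨_, rfl⟩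
  rw [← hLdef]
  have hL1 : 1 ≤ L := by
    rw [hLdef, Real.le_log_iff_exp_le (by positivity), le_div_iff₀ hx]
    calc Real.exp 1 * x ≤ Real.exp 1 * (1 / Real.exp 1) :=
          mul_le_mul_of_nonneg_left hx' (Real.exp_pos 1).le
      _ = 1 := by field_simp
  have hL0 : 0 < L := lt_of_lt_of_le one_pos hL1
  obtain ⟨lam, hlamdef⟩ : ∃ l : ℝ, l = ((n:ℝ) + 3) * x * L := ⟨_, rfl⟩
  rw [← hlamdef]
  have hlam : 0 < lam := by
    rw [hlamdef]; apply mul_pos (mul_pos (by linarith) hx) hL0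
  have hb : 0 < lam⁻¹ := inv_pos.mpr hlam
  obtain ⟨b, hbdef⟩ : ∃ b : ℝ, b = lam⁻¹ := ⟨_, rfl⟩
  rw [← hbdef]
  rw [← hbdef] at hb
  have haux := aux_integral_bound n hn b hb
  have hlb : Real.log (1 + b) ≤ Real.log 2 + L := by
    have hb4 : b ≤ (4 * x)⁻¹ := by
      rw [hbdef]
      apply inv_anti₀ (by positivity)
      rw [hlamdef]
      have hA : 4 * x ≤ ((n:ℝ) + 3) * x := by nlinarith
      have hB : ((n:ℝ) + 3) * x * 1 ≤ ((n:ℝ) + 3) * x * L :=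
        mul_le_mul_of_nonneg_left hL1 (by positivity)
      nlinarith
    have hxle1 : x ≤ 1 := by
      calc x ≤ 1 / Real.exp 1 := hx'
        _ ≤ 1 := by
          rw [div_le_one (Real.exp_pos 1)]
          linarith [Real.add_one_le_exp 1]
    have hx1 : 1 ≤ x⁻¹ := (one_le_inv₀ hx).2 hxle1
    have h2x : 1 + b ≤ 2 * x⁻¹ := by
      have : (4 * x)⁻¹ ≤ x⁻¹ := by
        apply inv_anti₀ hx
        nlinarith
      linarith
    calc Real.log (1 + b) ≤ Real.log (2 * x⁻¹) :=
          Real.log_le_log (by positivity) h2x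
      _ = Real.log 2 + L := by
          rw [Real.log_mul two_ne_zero (inv_ne_zero hx.ne'), hLdef, one_div]
  have hdiv : ((n:ℝ) - 1) * ((n:ℝ) + 1) / (n:ℝ) ≤ (n:ℝ) := by
    rw [div_le_iff₀ (by linarith)]
    nlinarith
  have hlog2 : Real.log 2 < 0.6931471808 := Real.log_two_lt_d9
  have hmain : 1 + Real.log (1 + b) + ((n:ℝ) - 1) * ((n:ℝ) + 1) / (n:ℝ)
      < ((n:ℝ) + 3) * L := by
    nlinarith [mul_le_mul_of_nonneg_left hL1 (by linarith : (0:ℝ) ≤ (n:ℝ) + 2)]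
  have hone : x * (b * (((n:ℝ) + 3) * L)) = 1 := by
    rw [hbdef, hlamdef]
    field_simp
  have hRHS : b * (1 + Real.log (1 + b)) + b * ((n:ℝ) - 1) * ((n:ℝ) + 1) / (n:ℝ)
      = b * (1 + Real.log (1 + b) + ((n:ℝ) - 1) * ((n:ℝ) + 1) / (n:ℝ)) := by
    ring
  calc x * ∫ t in Set.Ioc (0:ℝ) 1,
        (t ^ (n - 1) + b) * Real.log (1 + b * (t ^ (n - 1))⁻¹)
      ≤ x * (b * (1 + Real.log (1 + b) + ((n:ℝ) - 1) * ((n:ℝ) + 1) / (n:ℝ))) := by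
        rw [← hRHS]; exact mul_le_mul_of_nonneg_left haux hx.le
    _ < x * (b * (((n:ℝ) + 3) * L)) := by
        apply mul_lt_mul_of_pos_left _ hx
        exact mul_lt_mul_of_pos_left hmain hb
    _ = 1 := hone
end

section
/- Let a < b be reals, ε > 0, and let f : [a, b] → ℝ be a function that is Lipschitz on every compact subinterval of (a, b), so that f′ exists almost everywhere on (a, b), and suppose M := ∫_a^b e^{ε|f′(t)|} dt < +∞. Then for all a < s₁ < s₂ < b one has |f(s₂) − f(s₁)| ≤ ((s₂ − s₁)/ε) · log(M / (s₂ − s₁)). -/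
open MeasureTheory Filter Topology Set intervalIntegral

private lemma tendsto_slope_seq {F : ℝ → ℝ} {L s : ℝ} (h : HasDerivAt F L s)
    {u : ℕ → ℝ} (hu : Tendsto u atTop (𝓝 0)) (hne : ∀ n, u n ≠ 0) :
    Tendsto (fun n => (F (s + u n) - F s) / u n) atTop (𝓝 L) := by
  have h1 : Tendsto (fun n => s + u n) atTop (𝓝[≠] s) := by
    apply tendsto_nhdsWithin_of_tendsto_nhds_of_eventually_within
    · simpa using tendsto_const_nhds.add hu
    · filter_upwards with n
      simp [hne n]
  have h2 := (hasDerivAt_iff_tendsto_slope.mp h).comp h1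
  convert h2 using 2 with n
  simp [slope_def_field, Function.comp]

private lemma lipschitz_ftc {f : ℝ → ℝ} {c d : ℝ} {K : NNReal}
    (hK : LipschitzOnWith K f (Set.Icc c d)) {s₁ s₂ : ℝ}
    (h1 : c < s₁) (h12 : s₁ < s₂) (h2 : s₂ < d) :
    f s₂ - f s₁ = ∫ t in Set.Ioo s₁ s₂, deriv f t := by
  have hcd : c < d := h1.trans (h12.trans h2)
  set δ : ℝ := d - s₂ with hδdef
  have hδ : 0 < δ := by simp [hδdef]; linarith
  set u : ℕ → ℝ := fun n => δ / (n + 1) with hudef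
  have hupos : ∀ n, 0 < u n := fun n => div_pos hδ (by positivity)
  have hule : ∀ n, u n ≤ δ := fun n => by
    rw [hudef]
    exact div_le_self hδ.le (by norm_num : (1:ℝ) ≤ (n:ℝ) + 1)
  have hu0 : Tendsto u atTop (𝓝 0) := by
    have := tendsto_one_div_add_atTop_nhds_zero_nat (𝕜 := ℝ)
    have h := this.const_mul δ
    simpa [hudef, div_eq_mul_inv, mul_comm] using h
  have fcont : ContinuousOn f (Set.Icc c d) := hK.continuousOn
  -- interval integrability of f on subintervals of [c,d]
  have fint : ∀ x y, x ∈ Set.Icc c d → y ∈ Set.Icc c d →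
      IntervalIntegrable f volume x y := fun x y hx hy =>
    (fcont.mono (Set.uIcc_subset_Icc hx hy)).intervalIntegrable
  set F : ℝ → ℝ := fun x => ∫ t in c..x, f t with hFdef
  have hFderiv : ∀ s ∈ Set.Ioo c d, HasDerivAt F (f s) s := by
    intro s hs
    have hmem : Set.Icc c d ∈ 𝓝 s := Icc_mem_nhds hs.1 hs.2
    have hca : ContinuousAt f s := fcont.continuousAt hmem
    exact intervalIntegral.integral_hasDerivAt_right
      (fint c s ⟨le_rfl, hcd.le⟩ ⟨hs.1.le, hs.2.le⟩)
      (ContinuousOn.stronglyMeasurableAtFilter isOpen_Ioo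
        (fcont.mono Set.Ioo_subset_Icc_self) s hs) hca
  -- F y - F x = ∫ x..y f
  have hFdiff : ∀ x y, x ∈ Set.Icc c d → y ∈ Set.Icc c d →
      F y - F x = ∫ t in x..y, f t := by
    intro x y hx hy
    rw [hFdef]
    exact intervalIntegral.integral_interval_sub_left
      (fint c y ⟨le_rfl, hcd.le⟩ hy) (fint c x ⟨le_rfl, hcd.le⟩ hx)
  -- membership facts
  have hmem1 : s₁ ∈ Set.Icc c d := ⟨h1.le, (h12.trans h2).le⟩
  have hmem2 : s₂ ∈ Set.Icc c d := ⟨(h1.trans h12).le, h2.le⟩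
  have hmemu : ∀ n (t : ℝ), t ∈ Set.Icc s₁ s₂ → t + u n ∈ Set.Icc c d := by
    intro n t ht
    constructor
    · have := (hupos n).le; have := ht.1; nlinarith [h1.le]
    · have := hule n; have := ht.2; linarith
  -- Step A: compute the integral of the difference quotient
  have stepA : ∀ n, (∫ t in Set.Ioo s₁ s₂, (f (t + u n) - f t) / u n)
      = ((F (s₂ + u n) - F s₂) - (F (s₁ + u n) - F s₁)) / u n := by
    intro n
    have hIoo : (∫ t in Set.Ioo s₁ s₂, (f (t + u n) - f t) / u n)
        = ∫ t in s₁..s₂, (f (t + u n) - f t) / u n := by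
      rw [intervalIntegral.integral_of_le h12.le, integral_Ioc_eq_integral_Ioo]
    rw [hIoo, intervalIntegral.integral_div]
    congr 1
    have hint1 : IntervalIntegrable (fun t => f (t + u n)) volume s₁ s₂ := by
      have : ContinuousOn (fun t => f (t + u n)) (Set.uIcc s₁ s₂) := by
        apply fcont.comp (Continuous.continuousOn (by continuity))
        intro t ht
        rw [Set.uIcc_of_le h12.le] at ht
        exact hmemu n t ht
      exact this.intervalIntegrable
    have hint2 : IntervalIntegrable f volume s₁ s₂ := fint _ _ hmem1 hmem2
    rw [intervalIntegral.integral_sub hint1 hint2]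
    rw [intervalIntegral.integral_comp_add_right f (u n)]
    rw [← hFdiff s₁ s₂ hmem1 hmem2,
        ← hFdiff (s₁ + u n) (s₂ + u n) (hmemu n s₁ ⟨le_rfl, h12.le⟩)
          (hmemu n s₂ ⟨h12.le, le_rfl⟩)]
    ring
  -- Step B: limit of the integrals equals f s₂ - f s₁
  have stepB : Tendsto (fun n => ∫ t in Set.Ioo s₁ s₂, (f (t + u n) - f t) / u n)
      atTop (𝓝 (f s₂ - f s₁)) := by
    simp only [stepA]
    have t2 := tendsto_slope_seq (hFderiv s₂ ⟨h1.trans h12, h2⟩) hu0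
      (fun n => (hupos n).ne')
    have t1 := tendsto_slope_seq (hFderiv s₁ ⟨h1, h12.trans h2⟩) hu0
      (fun n => (hupos n).ne')
    have := t2.sub t1
    convert this using 2 with n
    field_simp
  -- Step C: dominated convergence
  have stepC : Tendsto (fun n => ∫ t in Set.Ioo s₁ s₂, (f (t + u n) - f t) / u n)
      atTop (𝓝 (∫ t in Set.Ioo s₁ s₂, deriv f t)) := by
    apply MeasureTheory.tendsto_integral_of_dominated_convergence
      (fun _ => (K : ℝ))
    · intro n
      apply ContinuousOn.aestronglyMeasurable _ measurableSet_Ioo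
      apply ContinuousOn.div_const
      apply ContinuousOn.sub
      · apply fcont.comp (Continuous.continuousOn (by continuity))
        intro t ht
        exact hmemu n t (Set.Ioo_subset_Icc_self ht)
      · exact fcont.mono (fun t ht => ⟨(h1.trans ht.1).le, (ht.2.trans h2).le⟩)
    · have : IntegrableOn (fun _ : ℝ => (K:ℝ)) (Set.Ioo s₁ s₂) volume :=
        integrableOn_const measure_Ioo_lt_top.ne
      exact this
    · intro n
      filter_upwards [ae_restrict_mem measurableSet_Ioo] with t ht
      have h1' : t ∈ Set.Icc c d := ⟨(h1.trans ht.1).le, (ht.2.trans h2).le⟩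
      have h2' : t + u n ∈ Set.Icc c d := hmemu n t (Set.Ioo_subset_Icc_self ht)
      have hd := hK.dist_le_mul _ h2' _ h1'
      rw [Real.dist_eq, Real.dist_eq] at hd
      simp only [add_sub_cancel_left] at hd
      rw [norm_div, Real.norm_eq_abs, Real.norm_eq_abs,
        abs_of_pos (hupos n), div_le_iff₀ (hupos n)]
      calc |f (t + u n) - f t| ≤ K * |u n| := hd
        _ = K * u n := by rw [abs_of_pos (hupos n)]
    · -- a.e. convergence to deriv f
      have hae := hK.ae_differentiableWithinAt_real measurableSet_Icc
      have hae' : ∀ᵐ t ∂(volume.restrict (Set.Ioo s₁ s₂)),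
          DifferentiableWithinAt ℝ f (Set.Icc c d) t :=
        ae_mono (Measure.restrict_mono
          (show Set.Ioo s₁ s₂ ⊆ Set.Icc c d from
            fun t ht => ⟨(h1.trans ht.1).le, (ht.2.trans h2).le⟩) le_rfl) hae
      filter_upwards [hae', ae_restrict_mem measurableSet_Ioo] with t hdiff ht
      have hmem : Set.Icc c d ∈ 𝓝 t :=
        Icc_mem_nhds (h1.trans ht.1) (ht.2.trans h2)
      have := (hdiff.differentiableAt hmem).hasDerivAt
      exact tendsto_slope_seq this hu0 (fun n => (hupos n).ne')
  exact tendsto_nhds_unique stepB stepC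

/-- Let `a < b`, `ε > 0`, and `f : [a,b] → ℝ` be Lipschitz on every compact
subinterval of `(a,b)` with `M := ∫_a^b e^{ε |f'|} < +∞`. Then for all `a < s₁ < s₂ < b`,
`|f(s₂) - f(s₁)| ≤ ((s₂ - s₁)/ε) log(M / (s₂ - s₁))`. -/
theorem one_dim_jensen_logLipschitz_estimate
    (a b : ℝ) (hab : a < b) (ε : ℝ) (hε : 0 < ε) (f : ℝ → ℝ)
    (hf : ∀ c d, a < c → c ≤ d → d < b →
      ∃ K : NNReal, LipschitzOnWith K f (Set.Icc c d))
    (hM : IntegrableOn (fun t => Real.exp (ε * |deriv f t|)) (Set.Ioo a b)) :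
    ∀ s₁ s₂, a < s₁ → s₁ < s₂ → s₂ < b →
      |f s₂ - f s₁| ≤ (s₂ - s₁) / ε *
        Real.log ((∫ t in Set.Ioo a b, Real.exp (ε * |deriv f t|)) / (s₂ - s₁)) := by
  intro s₁ s₂ hs₁ h12 hs₂
  set c : ℝ := (a + s₁) / 2 with hc
  set d : ℝ := (s₂ + b) / 2 with hd
  have hac : a < c := by rw [hc]; linarith
  have hcs : c < s₁ := by rw [hc]; linarith
  have hsd : s₂ < d := by rw [hd]; linarith
  have hdb : d < b := by rw [hd]; linarith
  obtain ⟨K, hK⟩ := hf c d hac (by linarith) hdb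
  have hftc := lipschitz_ftc hK hcs h12 hsd
  have hs12 : (0:ℝ) < s₂ - s₁ := by linarith
  -- bound on deriv
  have hderiv_bd : ∀ t ∈ Set.Ioo s₁ s₂, |deriv f t| ≤ (K : ℝ) := by
    intro t ht
    have hmem : Set.Icc c d ∈ 𝓝 t :=
      Icc_mem_nhds (hcs.trans ht.1) (ht.2.trans hsd)
    have := norm_fderiv_le_of_lipschitzOn ℝ hmem hK
    calc |deriv f t| = ‖fderiv ℝ f t 1‖ := by
          rw [← deriv]; rfl
      _ ≤ ‖fderiv ℝ f t‖ * ‖(1:ℝ)‖ := (fderiv ℝ f t).le_opNorm 1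
      _ ≤ (K:ℝ) := by simpa using this
  -- integrability of |deriv f| on Ioo s₁ s₂
  have hint_abs : IntegrableOn (fun t => |deriv f t|) (Set.Ioo s₁ s₂) := by
    apply Integrable.mono' (integrable_const (K:ℝ))
      ((measurable_deriv f).abs.aestronglyMeasurable)
    filter_upwards [ae_restrict_mem measurableSet_Ioo] with t ht
    rw [Real.norm_eq_abs, abs_abs]
    exact hderiv_bd t ht
  have hint_exp : IntegrableOn (fun t => Real.exp (ε * |deriv f t|))
      (Set.Ioo s₁ s₂) :=
    hM.mono_set (fun t ht => ⟨hs₁.trans ht.1, ht.2.trans hs₂⟩)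
  -- measure instances
  set μ := volume.restrict (Set.Ioo s₁ s₂) with hμ
  have hμuniv : μ Set.univ = ENNReal.ofReal (s₂ - s₁) := by
    rw [hμ, Measure.restrict_apply_univ, Real.volume_Ioo]
  haveI : IsFiniteMeasure μ := ⟨by rw [hμuniv]; exact ENNReal.ofReal_lt_top⟩
  haveI : NeZero μ := by
    refine ⟨fun h => ?_⟩
    have := hμuniv
    rw [h] at this
    simp only [Measure.coe_zero, Pi.zero_apply] at this
    rw [eq_comm, ENNReal.ofReal_eq_zero] at this
    linarith
  -- Jensen
  have hconv : ConvexOn ℝ Set.univ (fun x : ℝ => Real.exp (ε * x)) := by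
    have := convexOn_exp.comp_affineMap
      (LinearMap.toAffineMap (ε • LinearMap.id (R := ℝ) (M := ℝ)))
    simpa [Function.comp_def] using this
  have hjensen := hconv.map_average_le (μ := μ) (f := fun t => |deriv f t|)
    (Real.continuous_exp.comp (continuous_const.mul continuous_id)).continuousOn
    isClosed_univ (by filter_upwards with x; trivial) hint_abs
    (by exact hint_exp)
  -- averages
  have havg : ∀ g : ℝ → ℝ, (⨍ x, g x ∂μ) = (s₂ - s₁)⁻¹ * ∫ x, g x ∂μ := by
    intro g
    rw [average_eq, measureReal_def, hμuniv, ENNReal.toReal_ofReal hs12.le, smul_eq_mul]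
  set A : ℝ := ⨍ x, |deriv f x| ∂μ with hA
  have hAeq : A = (s₂ - s₁)⁻¹ * ∫ t in Set.Ioo s₁ s₂, |deriv f t| := havg _
  set M : ℝ := ∫ t in Set.Ioo a b, Real.exp (ε * |deriv f t|) with hMdef
  -- sub-integral bound
  have hsub : (∫ t in Set.Ioo s₁ s₂, Real.exp (ε * |deriv f t|)) ≤ M := by
    apply setIntegral_mono_set hM
    · filter_upwards with t using (Real.exp_pos _).le
    · exact HasSubset.Subset.eventuallyLE (fun t ht => ⟨hs₁.trans ht.1, ht.2.trans hs₂⟩)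
  have havgexp : (⨍ x, Real.exp (ε * |deriv f x|) ∂μ)
      = (s₂ - s₁)⁻¹ * ∫ t in Set.Ioo s₁ s₂, Real.exp (ε * |deriv f t|) := havg _
  -- key: ε * A ≤ log (M / (s₂ - s₁))
  have hkey : ε * A ≤ Real.log (M / (s₂ - s₁)) := by
    have h1 : Real.exp (ε * A) ≤ ⨍ x, Real.exp (ε * |deriv f x|) ∂μ := hjensen
    have h2 : (⨍ x, Real.exp (ε * |deriv f x|) ∂μ) ≤ M / (s₂ - s₁) := by
      rw [havgexp, div_eq_inv_mul]
      exact mul_le_mul_of_nonneg_left hsub (by positivity)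
    have h3 : Real.exp (ε * A) ≤ M / (s₂ - s₁) := h1.trans h2
    calc ε * A = Real.log (Real.exp (ε * A)) := (Real.log_exp _).symm
      _ ≤ Real.log (M / (s₂ - s₁)) :=
        Real.log_le_log (Real.exp_pos _) h3
  -- conclude
  have habs : |f s₂ - f s₁| ≤ ∫ t in Set.Ioo s₁ s₂, |deriv f t| := by
    rw [hftc]
    simpa [Real.norm_eq_abs] using
      norm_integral_le_integral_norm (μ := volume.restrict (Set.Ioo s₁ s₂)) (deriv f)
  have hIA : (∫ t in Set.Ioo s₁ s₂, |deriv f t|) = (s₂ - s₁) * A := by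
    rw [hAeq]; field_simp
  have hAle : A ≤ Real.log (M / (s₂ - s₁)) / ε := by
    rw [le_div_iff₀ hε]; linarith [hkey]
  calc |f s₂ - f s₁| ≤ (s₂ - s₁) * A := habs.trans_eq hIA
    _ ≤ (s₂ - s₁) * (Real.log (M / (s₂ - s₁)) / ε) :=
        mul_le_mul_of_nonneg_left hAle hs12.le
    _ = (s₂ - s₁) / ε * Real.log (M / (s₂ - s₁)) := by ring
end

section
/- Let n ≥ 2 and let P ⊂ ℝⁿ be a compact convex polytope with nonempty interior. Then there exists a constant c ∈ (0, 1) with the following property: for every pair of distinct points s₁, s₂ ∈ P there exists a compact set A contained in int P and contained in the hyperplane passing through the midpoint (s₁ + s₂)/2 and perpendicular to s₂ − s₁, such that c · ‖s₁ − s₂‖^{n−1} ≤ V_{n−1}(A) ≤ 1 and ‖s₁ − σ‖ ≤ ‖s₁ − s₂‖/(2c) for all σ ∈ A, where V_{n−1} denotes (n−1)-dimensional Hausdorff measure. -/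
open MeasureTheory Filter Topology RealInnerProductSpace
open scoped ENNReal NNReal

-- scaling a ball toward a point of a convex set stays in the interior
lemma aux_ball_scale {E : Type*} [NormedAddCommGroup E] [NormedSpace ℝ E]
    {P : Set E} (hP : Convex ℝ P) {x c : E} {r lam : ℝ}
    (hx : x ∈ P) (hc : Metric.ball c r ⊆ interior P)
    (h0 : 0 < lam) (h1 : lam ≤ 1) :
    Metric.ball (x + lam • (c - x)) (lam * r) ⊆ interior P := by
  intro y hy
  rw [Metric.mem_ball, dist_eq_norm] at hy
  set p := x + lam • (c - x) with hp
  set z := c + lam⁻¹ • (y - p) with hz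
  have hzball : z ∈ Metric.ball c r := by
    rw [Metric.mem_ball, dist_eq_norm, hz, add_sub_cancel_left, norm_smul,
      Real.norm_eq_abs, abs_of_pos (inv_pos.mpr h0)]
    calc lam⁻¹ * ‖y - p‖ < lam⁻¹ * (lam * r) :=
          mul_lt_mul_of_pos_left hy (inv_pos.mpr h0)
      _ = r := by field_simp
  have hcan : lam • (lam⁻¹ • (y - p)) = y - p := smul_inv_smul₀ h0.ne' _
  have hyz : x + lam • (z - x) = y := by
    have hz1 : z - x = (c - x) + lam⁻¹ • (y - p) := by rw [hz]; abel
    rw [hz1, smul_add, hcan, hp]; abel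
  rw [← hyz]
  exact hP.add_smul_sub_mem_interior hx (hc hzball) (Set.mem_Ioc.mpr ⟨h0, h1⟩)

-- main geometric lemma: find a center on the bisector hyperplane
set_option maxHeartbeats 1000000 in
lemma aux_disk_center {n : ℕ} {P : Set (EuclideanSpace ℝ (Fin n))}
    (hconv : Convex ℝ P) {x₀ : EuclideanSpace ℝ (Fin n)} {r R : ℝ}
    (hr : 0 < r) (hrR : r ≤ R)
    (hball : Metric.ball x₀ r ⊆ interior P)
    (hRb : P ⊆ Metric.closedBall x₀ R)
    {s t : EuclideanSpace ℝ (Fin n)} (hs : s ∈ P) (ht : t ∈ P) (hst : s ≠ t)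
    (hair : 0 ≤ ⟪x₀ - midpoint ℝ s t, t - s⟫) :
    ∃ q, ⟪q - midpoint ℝ s t, t - s⟫ = 0 ∧ ‖q - midpoint ℝ s t‖ ≤ ‖s - t‖ ∧
      Metric.closedBall q (r * ‖s - t‖ / (14 * R)) ⊆ interior P := by
  have hR0 : 0 < R := lt_of_lt_of_le hr hrR
  set m' := midpoint ℝ s t with hm'
  set d := ‖s - t‖ with hd
  clear_value m' d
  have hd0 : 0 < d := by rw [hd]; exact norm_pos_iff.mpr (sub_ne_zero.mpr hst)
  have hv : ‖t - s‖ = d := by rw [hd, norm_sub_rev]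
  have hsx : ‖x₀ - s‖ ≤ R := by
    have h := hRb hs; rw [Metric.mem_closedBall] at h
    rw [← dist_eq_norm, dist_comm]; exact h
  have hm'P : m' ∈ P := by
    rw [hm']; exact hconv.segment_subset hs ht (midpoint_mem_segment s t)
  have hmx : ‖x₀ - m'‖ ≤ R := by
    have h := hRb hm'P; rw [Metric.mem_closedBall] at h
    rw [← dist_eq_norm, dist_comm]; exact h
  have hd2R : d ≤ 2 * R := by
    have h1 := hRb hs; have h2 := hRb ht
    rw [Metric.mem_closedBall] at h1 h2
    have h3 : d = dist s t := by rw [hd, dist_eq_norm]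
    have h4 : dist s t ≤ dist s x₀ + dist x₀ t := dist_triangle _ _ _
    rw [dist_comm x₀ t] at h4
    linarith
  set a := (⟪x₀ - m', t - s⟫ : ℝ) with ha
  have haR : a ≤ R * d := by
    rw [ha]
    calc (⟪x₀ - m', t - s⟫ : ℝ) ≤ ‖x₀ - m'‖ * ‖t - s‖ := real_inner_le_norm _ _
      _ ≤ R * d := by rw [hv]; exact mul_le_mul_of_nonneg_right hmx hd0.le
  have hsm : s - m' = (-(2⁻¹) : ℝ) • (t - s) := by
    rw [hm', left_sub_midpoint, invOf_eq_inv]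
    module
  have hinner_sm : (⟪s - m', t - s⟫ : ℝ) = -(d ^ 2 / 2) := by
    rw [hsm, real_inner_smul_left, real_inner_self_eq_norm_sq, hv]; ring
  have hinner_xs : (⟪x₀ - s, t - s⟫ : ℝ) = a + d ^ 2 / 2 := by
    have hx : x₀ - s = (x₀ - m') - (s - m') := by abel
    rw [hx, inner_sub_left, hinner_sm, ← ha]; ring
  clear_value a
  have hden : 0 < a + d ^ 2 / 2 := by nlinarith
  set lam := (d ^ 2 / 2) / (a + d ^ 2 / 2) with hlam
  clear_value lam
  have hlam0 : 0 < lam := by rw [hlam]; exact div_pos (by positivity) hden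
  have hlam1 : lam ≤ 1 := by rw [hlam]; exact (div_le_one hden).mpr (by nlinarith)
  have hlamlow : d ≤ 4 * R * lam := by
    have hkey : d * (a + d ^ 2 / 2) ≤ 4 * R * (d ^ 2 / 2) := by nlinarith
    have h4 : 4 * R * lam = 4 * R * (d ^ 2 / 2) / (a + d ^ 2 / 2) := by
      rw [hlam]; ring
    rw [h4, le_div_iff₀ hden]; exact hkey
  set p := s + lam • (x₀ - s) with hp
  clear_value p
  have hfp : (⟪p - m', t - s⟫ : ℝ) = 0 := by
    have h1 : p - m' = (s - m') + lam • (x₀ - s) := by rw [hp]; abel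
    rw [h1, inner_add_left, real_inner_smul_left, hinner_sm, hinner_xs]
    have h2 : lam * (a + d ^ 2 / 2) = d ^ 2 / 2 := by
      rw [hlam]; exact div_mul_cancel₀ _ hden.ne'
    linarith
  have hpm3 : ‖p - m'‖ ≤ 3 * R * lam := by
    have h1 : ‖s - m'‖ = d / 2 := by
      rw [hsm, norm_smul, hv, Real.norm_eq_abs, abs_neg, abs_inv, abs_two]; ring
    have h2 : p - m' = (s - m') + lam • (x₀ - s) := by rw [hp]; abel
    calc ‖p - m'‖ ≤ ‖s - m'‖ + ‖lam • (x₀ - s)‖ := by rw [h2]; exact norm_add_le _ _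
      _ = d / 2 + lam * ‖x₀ - s‖ := by
          rw [h1, norm_smul, Real.norm_eq_abs, abs_of_pos hlam0]
      _ ≤ 2 * R * lam + lam * R := by
          have h3 := mul_le_mul_of_nonneg_left hsx hlam0.le
          linarith
      _ = 3 * R * lam := by ring
  set x := ‖p - m'‖ with hxdef
  clear_value x
  have hx0 : 0 ≤ x := by rw [hxdef]; exact norm_nonneg _
  have hdx : 0 < d + x := by linarith
  set mu := d / (d + x) with hmu
  clear_value mu
  have hmu0 : 0 < mu := by rw [hmu]; exact div_pos hd0 hdx
  have hmu1 : mu ≤ 1 := by rw [hmu]; exact (div_le_one hdx).mpr (by linarith)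
  refine ⟨m' + mu • (p - m'), ?_, ?_, ?_⟩
  · rw [add_sub_cancel_left, real_inner_smul_left, hfp, mul_zero]
  · rw [add_sub_cancel_left, norm_smul, Real.norm_eq_abs, abs_of_pos hmu0, ← hxdef, hmu,
      div_mul_eq_mul_div, div_le_iff₀ hdx]
    nlinarith
  · have hb1 : Metric.ball p (lam * r) ⊆ interior P := by
      rw [hp]; exact aux_ball_scale hconv hs hball hlam0 hlam1
    have hb2 : Metric.ball (m' + mu • (p - m')) (mu * (lam * r)) ⊆ interior P :=
      aux_ball_scale hconv hm'P hb1 hmu0 hmu1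
    refine (Metric.closedBall_subset_ball ?_).trans hb2
    have hmueq : mu * (lam * r) = d * (lam * r) / (d + x) := by rw [hmu]; ring
    rw [hmueq, div_lt_div_iff₀ (by positivity) hdx]
    have hxle : x ≤ 3 * R * lam := hpm3
    have hkey : d + x < 14 * R * lam := by nlinarith [mul_pos hR0 hlam0]
    have h2 := mul_lt_mul_of_pos_left hkey (mul_pos hr hd0)
    nlinarith [h2]

-- Hausdorff measure bounds for a Euclidean closed ball in its own dimension
lemma aux_hausdorff_ball (k : ℕ) (hk : 1 ≤ k) {ρ : ℝ} (hρ : 0 ≤ ρ) :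
    ENNReal.ofReal ((2 * ρ / Real.sqrt k) ^ k) ≤
        μH[(k : ℝ)] (Metric.closedBall (0 : EuclideanSpace ℝ (Fin k)) ρ) ∧
      μH[(k : ℝ)] (Metric.closedBall (0 : EuclideanSpace ℝ (Fin k)) ρ) ≤
        ENNReal.ofReal ((2 * Real.sqrt k * ρ) ^ k) := by
  have hk0 : (0 : ℝ) < k := by exact_mod_cast hk
  have hsk0 : 0 < Real.sqrt k := Real.sqrt_pos.mpr hk0
  set e := WithLp.equiv 2 (Fin k → ℝ) with he
  set K : ℝ≥0 := (Fintype.card (Fin k) : ℝ≥0) ^ ((1 / (2 : ℝ≥0∞)).toReal) with hK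
  have htor : ((1 / (2 : ℝ≥0∞)).toReal) = 1 / 2 := by
    rw [ENNReal.toReal_div]; norm_num
  have hKval : (K : ℝ) = Real.sqrt k := by
    rw [hK, NNReal.coe_rpow, NNReal.coe_natCast, Fintype.card_fin, htor,
      Real.sqrt_eq_rpow]
  have hlip : LipschitzWith 1 e := PiLp.lipschitzWith_ofLp 2 _
  have hanti : AntilipschitzWith K e := PiLp.antilipschitzWith_ofLp 2 _
  have hsymm : LipschitzWith K e.symm :=
    hanti.to_rightInverse (fun y => e.apply_symm_apply y)
  have hμY : (μH[(k : ℝ)] : Measure (Fin k → ℝ)) = volume := by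
    have h := MeasureTheory.hausdorffMeasure_pi_real (ι := Fin k)
    simpa using h
  set B := Metric.closedBall (0 : EuclideanSpace ℝ (Fin k)) ρ with hB
  have he0 : e 0 = 0 := rfl
  have hsub1 : Metric.closedBall (0 : Fin k → ℝ) (ρ / Real.sqrt k) ⊆ e '' B := by
    intro y hy
    rw [Metric.mem_closedBall] at hy
    refine ⟨e.symm y, ?_, e.apply_symm_apply y⟩
    rw [hB, Metric.mem_closedBall]
    have h1 := hanti.le_mul_dist (e.symm y) 0
    rw [e.apply_symm_apply, he0, hKval] at h1
    calc dist (e.symm y) 0 ≤ Real.sqrt k * dist y 0 := h1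
      _ ≤ Real.sqrt k * (ρ / Real.sqrt k) := mul_le_mul_of_nonneg_left hy hsk0.le
      _ = ρ := by field_simp
  have hsub2 : e '' B ⊆ Metric.closedBall (0 : Fin k → ℝ) ρ := by
    rintro _ ⟨z, hz, rfl⟩
    rw [hB, Metric.mem_closedBall] at hz
    rw [Metric.mem_closedBall]
    calc dist (e z) 0 = dist (e z) (e 0) := by rw [he0]
      _ ≤ 1 * dist z 0 := hlip.dist_le_mul _ _
      _ ≤ ρ := by rw [one_mul]; exact hz
  constructor
  · calc ENNReal.ofReal ((2 * ρ / Real.sqrt k) ^ k)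
        = volume (Metric.closedBall (0 : Fin k → ℝ) (ρ / Real.sqrt k)) := by
          rw [Real.volume_pi_closedBall _ (by positivity), Fintype.card_fin]
          congr 2
          ring
      _ ≤ volume (e '' B) := measure_mono hsub1
      _ = μH[(k : ℝ)] (e '' B) := by rw [hμY]
      _ ≤ (1 : ℝ≥0∞) ^ (k : ℝ) * μH[(k : ℝ)] B :=
          hlip.hausdorffMeasure_image_le (by positivity) B
      _ = μH[(k : ℝ)] B := by simp
  · calc μH[(k : ℝ)] B = μH[(k : ℝ)] (e.symm '' (e '' B)) := by
          rw [Equiv.symm_image_image]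
      _ ≤ (K : ℝ≥0∞) ^ (k : ℝ) * μH[(k : ℝ)] (e '' B) :=
          hsymm.hausdorffMeasure_image_le (by positivity) _
      _ ≤ (K : ℝ≥0∞) ^ (k : ℝ) * volume (Metric.closedBall (0 : Fin k → ℝ) ρ) := by
          rw [hμY]; exact mul_le_mul_right (measure_mono hsub2) _
      _ = ENNReal.ofReal ((2 * Real.sqrt k * ρ) ^ k) := by
          rw [Real.volume_pi_closedBall _ hρ, Fintype.card_fin, ENNReal.rpow_natCast,
            ← ENNReal.coe_pow, ← ENNReal.ofReal_coe_nnreal, NNReal.coe_pow, hKval,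
            ← ENNReal.ofReal_mul (by positivity), ← mul_pow]
          congr 2
          ring

set_option maxHeartbeats 1000000 in
/-- Let `n ≥ 2` and `P ⊂ ℝⁿ` be a compact convex polytope with nonempty
interior. There is `c ∈ (0,1)` such that for all distinct `s₁, s₂ ∈ P` there is a compact
set `A ⊆ int P` contained in the perpendicular bisector hyperplane of `[s₁, s₂]` with
`c ‖s₁ - s₂‖^{n-1} ≤ V_{n-1}(A) ≤ 1` and `‖s₁ - σ‖ ≤ ‖s₁ - s₂‖/(2c)` for all `σ ∈ A`,
where `V_{n-1}` is the `(n-1)`-dimensional Hausdorff measure. -/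
theorem polytope_bisector_slab_estimate
    (n : ℕ) (hn : 2 ≤ n) (P : Set (EuclideanSpace ℝ (Fin n)))
    (T : Finset (EuclideanSpace ℝ (Fin n)))
    (hP : P = convexHull ℝ (T : Set (EuclideanSpace ℝ (Fin n))))
    (hPint : (interior P).Nonempty) :
    ∃ c ∈ Set.Ioo (0:ℝ) 1, ∀ s₁ ∈ P, ∀ s₂ ∈ P, s₁ ≠ s₂ →
      ∃ A : Set (EuclideanSpace ℝ (Fin n)), IsCompact A ∧ A ⊆ interior P ∧
        (∀ σ ∈ A, ⟪σ - (2:ℝ)⁻¹ • (s₁ + s₂), s₂ - s₁⟫ = 0) ∧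
        ENNReal.ofReal (c * ‖s₁ - s₂‖ ^ (n - 1)) ≤ μH[(n:ℝ) - 1] A ∧
        μH[(n:ℝ) - 1] A ≤ 1 ∧
        ∀ σ ∈ A, ‖s₁ - σ‖ ≤ ‖s₁ - s₂‖ / (2 * c) := by
  classical
  obtain ⟨x₀, hx₀⟩ := hPint
  obtain ⟨r, hr, hball⟩ := Metric.isOpen_iff.mp isOpen_interior x₀ hx₀
  have hconv : Convex ℝ P := hP ▸ convex_convexHull ℝ _
  have hbd : Bornology.IsBounded P := by
    rw [hP]; exact isBounded_convexHull.mpr T.finite_toSet.isBounded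
  obtain ⟨R₀, hR₀⟩ := hbd.subset_closedBall x₀
  set R := max R₀ r with hRdef
  have hrR : r ≤ R := le_max_right _ _
  have hR0 : 0 < R := lt_of_lt_of_le hr hrR
  have hRb : P ⊆ Metric.closedBall x₀ R :=
    hR₀.trans (Metric.closedBall_subset_closedBall (le_max_left _ _))
  clear_value R
  set k := n - 1 with hkdef
  have hk1 : 1 ≤ k := by omega
  set sk := Real.sqrt k with hskdef
  have hk0 : (0 : ℝ) < k := by exact_mod_cast hk1
  have hsk1 : 1 ≤ sk := by
    rw [hskdef]
    have h1 : (1 : ℝ) ≤ (k : ℝ) := by exact_mod_cast hk1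
    nlinarith [Real.sq_sqrt (by linarith : (0:ℝ) ≤ (k:ℝ)), Real.sqrt_nonneg (k:ℝ)]
  have hsk0 : 0 < sk := lt_of_lt_of_le one_pos hsk1
  clear_value sk
  set ε := min (r / (14 * R)) (1 / (8 * R * sk)) with hεdef
  have hε0 : 0 < ε := by rw [hεdef]; exact lt_min (by positivity) (by positivity)
  have hε1 : ε ≤ r / (14 * R) := by rw [hεdef]; exact min_le_left _ _
  have hε2 : ε ≤ 1 / (8 * R * sk) := by rw [hεdef]; exact min_le_right _ _
  clear_value ε
  have hε14 : ε ≤ 1 / 14 := by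
    refine hε1.trans ?_
    rw [div_le_div_iff₀ (by positivity) (by norm_num)]
    nlinarith
  set c := min ((2 * ε / sk) ^ k) (6⁻¹ : ℝ) with hcdef
  have hc0 : 0 < c := by rw [hcdef]; exact lt_min (by positivity) (by norm_num)
  have hc6 : c ≤ 6⁻¹ := by rw [hcdef]; exact min_le_right _ _
  have hcpow : c ≤ (2 * ε / sk) ^ k := by rw [hcdef]; exact min_le_left _ _
  clear_value c
  refine ⟨c, ⟨hc0, lt_of_le_of_lt hc6 (by norm_num)⟩, ?_⟩
  intro s₁ hs₁ s₂ hs₂ hne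
  set d := ‖s₁ - s₂‖ with hddef
  have hd0 : 0 < d := by rw [hddef]; exact norm_pos_iff.mpr (sub_ne_zero.mpr hne)
  have hd2R : d ≤ 2 * R := by
    have h1 := hRb hs₁; have h2 := hRb hs₂
    rw [Metric.mem_closedBall] at h1 h2
    have h3 : d = dist s₁ s₂ := by rw [hddef, dist_eq_norm]
    have h4 : dist s₁ s₂ ≤ dist s₁ x₀ + dist x₀ s₂ := dist_triangle _ _ _
    rw [dist_comm x₀ s₂] at h4
    linarith
  have hmid : midpoint ℝ s₁ s₂ = (2:ℝ)⁻¹ • (s₁ + s₂) := by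
    rw [midpoint_eq_smul_add, invOf_eq_inv]
  obtain ⟨q, hq1, hq2, hq3⟩ :
      ∃ q, (⟪q - midpoint ℝ s₁ s₂, s₂ - s₁⟫ : ℝ) = 0 ∧ ‖q - midpoint ℝ s₁ s₂‖ ≤ d ∧
        Metric.closedBall q (r * d / (14 * R)) ⊆ interior P := by
    rw [hddef]
    rcases le_total 0 (⟪x₀ - midpoint ℝ s₁ s₂, s₂ - s₁⟫ : ℝ) with h | h
    · exact aux_disk_center hconv hr hrR hball hRb hs₁ hs₂ hne h
    · have h' : 0 ≤ (⟪x₀ - midpoint ℝ s₂ s₁, s₁ - s₂⟫ : ℝ) := by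
        rw [midpoint_comm, show s₁ - s₂ = -(s₂ - s₁) from (neg_sub _ _).symm,
          inner_neg_right]
        linarith
      obtain ⟨q, a1, a2, a3⟩ :=
        aux_disk_center hconv hr hrR hball hRb hs₂ hs₁ hne.symm h'
      rw [midpoint_comm, show s₁ - s₂ = -(s₂ - s₁) from (neg_sub _ _).symm,
        inner_neg_right, neg_eq_zero] at a1
      rw [midpoint_comm, norm_sub_rev s₂ s₁] at a2
      rw [norm_sub_rev s₂ s₁] at a3
      exact ⟨q, a1, a2, a3⟩
  clear_value d
  have hv : s₂ - s₁ ≠ 0 := sub_ne_zero.mpr hne.symm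
  haveI : Fact (Module.finrank ℝ (EuclideanSpace ℝ (Fin n)) = k + 1) :=
    ⟨by rw [finrank_euclideanSpace_fin]; omega⟩
  obtain ⟨L, hLorth⟩ : ∃ L : EuclideanSpace ℝ (Fin k) →ₗᵢ[ℝ] EuclideanSpace ℝ (Fin n),
      ∀ x, (⟪L x, s₂ - s₁⟫ : ℝ) = 0 := by
    refine ⟨(Submodule.subtypeₗᵢ ((ℝ ∙ (s₂ - s₁))ᗮ)).comp
      (OrthonormalBasis.fromOrthogonalSpanSingleton k hv).repr.symm.toLinearIsometry, ?_⟩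
    intro x
    rw [real_inner_comm]
    exact ((OrthonormalBasis.fromOrthogonalSpanSingleton k hv).repr.symm.toLinearIsometry
      x).2 (s₂ - s₁) (Submodule.mem_span_singleton_self _)
  set ρ := ε * d with hρdef
  have hρ0 : 0 < ρ := by rw [hρdef]; exact mul_pos hε0 hd0
  have hρrd : ρ ≤ r * d / (14 * R) := by
    rw [hρdef]
    calc ε * d ≤ (r / (14 * R)) * d := mul_le_mul_of_nonneg_right hε1 hd0.le
      _ = r * d / (14 * R) := by ring
  have hρd : ρ ≤ d := by rw [hρdef]; nlinarith
  have hρsk : 2 * sk * ρ ≤ 1 := by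
    have h8 : ε * (8 * R * sk) ≤ 1 := by
      rw [← le_div_iff₀ (by positivity)]; exact hε2
    rw [hρdef]
    nlinarith [mul_le_mul_of_nonneg_left hd2R (by positivity : (0:ℝ) ≤ 2 * sk * ε)]
  have hρc : c * d ^ k ≤ (2 * ρ / sk) ^ k := by
    calc c * d ^ k ≤ (2 * ε / sk) ^ k * d ^ k :=
          mul_le_mul_of_nonneg_right hcpow (by positivity)
      _ = (2 * ρ / sk) ^ k := by
          rw [← mul_pow, hρdef]; congr 1; ring
  clear_value ρ
  set φ : EuclideanSpace ℝ (Fin k) → EuclideanSpace ℝ (Fin n) := fun x => q + L x with hφdef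
  have hφiso : Isometry φ := by
    apply Isometry.of_dist_eq
    intro a b
    rw [hφdef]
    simp only [dist_add_left]
    exact L.isometry.dist_eq a b
  have hAcb : ∀ x ∈ Metric.closedBall (0 : EuclideanSpace ℝ (Fin k)) ρ,
      φ x ∈ Metric.closedBall q ρ := by
    intro x hx
    rw [Metric.mem_closedBall] at hx ⊢
    rw [hφdef]
    simp only []
    rw [dist_eq_norm, show q + L x - q = L x by abel, L.norm_map]
    rw [dist_eq_norm, sub_zero] at hx
    exact hx
  have hcast : ((k : ℕ) : ℝ) = (n : ℝ) - 1 := by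
    rw [hkdef, Nat.cast_sub (by omega : 1 ≤ n)]; norm_num
  have hμA : μH[(n:ℝ) - 1] (φ '' Metric.closedBall 0 ρ) =
      μH[((k : ℕ) : ℝ)] (Metric.closedBall (0 : EuclideanSpace ℝ (Fin k)) ρ) := by
    rw [← hcast]
    exact hφiso.hausdorffMeasure_image (Or.inl (by positivity)) _
  obtain ⟨hlb, hub⟩ := aux_hausdorff_ball k hk1 hρ0.le
  rw [← hskdef] at hlb hub
  refine ⟨φ '' Metric.closedBall 0 ρ, ?_, ?_, ?_, ?_, ?_, ?_⟩
  · exact (isCompact_closedBall _ _).image hφiso.continuous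
  · intro σ hσ
    obtain ⟨x, hx, rfl⟩ := hσ
    apply hq3
    have h1 := hAcb x hx
    rw [Metric.mem_closedBall] at h1 ⊢
    exact h1.trans hρrd
  · intro σ hσ
    obtain ⟨x, hx, rfl⟩ := hσ
    rw [← hmid]
    have hsplit : φ x - midpoint ℝ s₁ s₂ = (q - midpoint ℝ s₁ s₂) + L x := by
      rw [hφdef]; beta_reduce; abel
    rw [hsplit, inner_add_left, hq1, hLorth x, add_zero]
  · rw [hμA]
    refine le_trans ?_ hlb
    exact ENNReal.ofReal_le_ofReal hρc
  · rw [hμA]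
    refine le_trans hub ?_
    rw [← ENNReal.ofReal_one]
    apply ENNReal.ofReal_le_ofReal
    calc (2 * sk * ρ) ^ k ≤ 1 ^ k := pow_le_pow_left₀ (by positivity) hρsk k
      _ = 1 := one_pow k
  · intro σ hσ
    obtain ⟨x, hx, rfl⟩ := hσ
    have h1 : ‖s₁ - midpoint ℝ s₁ s₂‖ = d / 2 := by
      rw [left_sub_midpoint, invOf_eq_inv, norm_smul, ← hddef, Real.norm_eq_abs, abs_inv,
        abs_two]
      ring
    have h2 : ‖q - φ x‖ ≤ ρ := by
      rw [hφdef]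
      simp only []
      rw [show q - (q + L x) = -(L x) by abel, norm_neg, L.norm_map]
      rw [Metric.mem_closedBall, dist_eq_norm, sub_zero] at hx
      exact hx
    have h3 : ‖midpoint ℝ s₁ s₂ - q‖ ≤ d := by rw [norm_sub_rev]; exact hq2
    have hX : ‖s₁ - φ x‖ ≤ 3 * d := by
      calc ‖s₁ - φ x‖ = ‖(s₁ - midpoint ℝ s₁ s₂) + (midpoint ℝ s₁ s₂ - q) + (q - φ x)‖ := by
            congr 1; abel
        _ ≤ ‖s₁ - midpoint ℝ s₁ s₂‖ + ‖midpoint ℝ s₁ s₂ - q‖ + ‖q - φ x‖ := norm_add₃_le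
        _ ≤ d / 2 + d + d := by
            rw [h1]; exact add_le_add (add_le_add le_rfl h3) (h2.trans hρd)
        _ ≤ 3 * d := by linarith
    rw [le_div_iff₀ (by positivity : (0:ℝ) < 2 * c)]
    nlinarith [norm_nonneg (s₁ - φ x)]
end

section
/- Let P ⊂ ℝⁿ be a compact convex set with nonempty interior and let G : P → ℝ be a convex function. Suppose there is a constant C > 0 with C ≥ diam(P) such that |G(s) − G(s′)| ≤ C · ‖s − s′‖ · log(C / ‖s − s′‖) for all distinct s, s′ ∈ P. Then at every point s ∈ int P at which G is differentiable one has ‖∇G(s)‖ ≤ C · log(C / dist(s, ∂P)). -/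
open MeasureTheory Filter Topology Metric

/-- Tangent line inequality for a convex function at a point of differentiability. -/
lemma aux_tangent_le {E : Type*} [NormedAddCommGroup E] [InnerProductSpace ℝ E] [CompleteSpace E]
    {P : Set E} {G : E → ℝ} (hG : ConvexOn ℝ P G)
    {x y : E} (hx : x ∈ P) (hy : y ∈ P) {g : E}
    (hg : HasGradientAt G g x) :
    (inner ℝ g (y - x) : ℝ) ≤ G y - G x := by
  have hfd : HasFDerivAt G (InnerProductSpace.toDual ℝ E g) x := hg.hasFDerivAt
  set φ : ℝ → ℝ := fun t => G (x + t • (y - x)) with hφ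
  have hc : HasDerivAt (fun t : ℝ => x + t • (y - x)) (y - x) 0 := by
    simpa using ((hasDerivAt_id (0:ℝ)).smul_const (y - x)).const_add x
  have hd : HasDerivAt φ ((inner ℝ g (y - x) : ℝ)) 0 := by
    have := HasFDerivAt.comp_hasDerivAt 0 (by simpa using hfd) hc
    simp only [InnerProductSpace.toDual_apply_apply] at this
    exact this
  have hslope : Filter.Tendsto (slope φ 0) (𝓝[>] 0) (𝓝 ((inner ℝ g (y - x) : ℝ))) :=
    (hasDerivAt_iff_tendsto_slope.1 hd).mono_left
      (nhdsWithin_mono 0 (fun t ht => ne_of_gt ht))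
  refine le_of_tendsto hslope ?_
  filter_upwards [Ioc_mem_nhdsGT_of_mem (by norm_num : (0:ℝ) ∈ Set.Ico (0:ℝ) 1)]
    with t ht
  obtain ⟨ht0, ht1⟩ := ht
  have hconv := hG.2 hx hy (show (0:ℝ) ≤ 1 - t by linarith) (le_of_lt ht0)
    (show (1 - t) + t = 1 by ring)
  have hpt : (1 - t) • x + t • y = x + t • (y - x) := by
    rw [smul_sub]; module
  rw [hpt] at hconv
  have : φ t - φ 0 ≤ t * (G y - G x) := by
    simp only [φ, zero_smul, add_zero]
    simp only [smul_eq_mul] at hconv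
    nlinarith
  rw [slope_def_field]
  simp only [sub_zero]
  rw [div_le_iff₀ ht0]
  simpa [φ] using this.trans_eq (by ring)

/-- Let `P ⊂ ℝⁿ` be compact convex with nonempty interior and `G : P → ℝ`
convex. If `C > 0`, `C ≥ diam P`, and `|G(s) - G(s')| ≤ C ‖s - s'‖ log(C/‖s - s'‖)` for
all distinct `s, s' ∈ P`, then at every interior point of differentiability,
`‖∇G(s)‖ ≤ C log(C / dist(s, ∂P))`. -/
theorem logLipschitz_implies_gradient_bound
    (n : ℕ) (P : Set (EuclideanSpace ℝ (Fin n)))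
    (hPc : IsCompact P) (hPconv : Convex ℝ P) (hPint : (interior P).Nonempty)
    (G : EuclideanSpace ℝ (Fin n) → ℝ) (hconv : ConvexOn ℝ P G)
    (C : ℝ) (hC : 0 < C) (hCdiam : Metric.diam P ≤ C)
    (hLL : ∀ s ∈ P, ∀ s' ∈ P, s ≠ s' →
      |G s - G s'| ≤ C * ‖s - s'‖ * Real.log (C / ‖s - s'‖)) :
    ∀ s ∈ interior P, DifferentiableAt ℝ G s →
      ‖gradient G s‖ ≤ C * Real.log (C / Metric.infDist s (frontier P)) := by
  intro s hs hdiff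
  have hPclosed : IsClosed P := hPc.isClosed
  have hsP : s ∈ P := interior_subset hs
  set g := gradient G s with hg
  set r := Metric.infDist s (frontier P) with hr
  by_cases hg0 : g = 0
  · -- trivial case: gradient zero, RHS nonneg
    rw [hg0, norm_zero]
    rcases Set.eq_empty_or_nonempty (frontier P) with hfe | hfne
    · simp [hr, hfe, Metric.infDist_empty]
    · obtain ⟨y, hy⟩ := hfne
      have hyP : y ∈ P := hPclosed.frontier_subset hy
      have hrC : r ≤ C := le_trans (Metric.infDist_le_dist_of_mem hy)
        (le_trans (Metric.dist_le_diam_of_mem hPc.isBounded hsP hyP) hCdiam)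
      rcases le_or_gt r 0 with h0 | h0
      · have hr0 : r = 0 := le_antisymm h0 Metric.infDist_nonneg
        rw [hr0, div_zero, Real.log_zero, mul_zero]
      · have h1 : (1:ℝ) ≤ C / r := (one_le_div h0).2 hrC
        exact mul_nonneg hC.le (Real.log_nonneg h1)
  · -- gradient nonzero
    haveI : Nontrivial (EuclideanSpace ℝ (Fin n)) := nontrivial_of_ne g 0 hg0
    have hPne : P ≠ Set.univ := by
      intro h
      exact (RealNormedSpace.noncompactSpace
        (E := EuclideanSpace ℝ (Fin n))).noncompact_univ (h ▸ hPc)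
    -- frontier nonempty, r > 0
    obtain ⟨y, hyfr, hydist⟩ := exists_mem_frontier_infDist_compl_eq_dist hsP hPne
    have hfne : (frontier P).Nonempty := ⟨y, hyfr⟩
    have hrpos : 0 < r := by
      rw [hr]
      refine (isClosed_frontier.notMem_iff_infDist_pos hfne).1 ?_
      exact fun hcon => hcon.2 hs
    have hyP : y ∈ P := hPclosed.frontier_subset hyfr
    have hrC : r ≤ C := le_trans (Metric.infDist_le_dist_of_mem hyfr)
      (le_trans (Metric.dist_le_diam_of_mem hPc.isBounded hsP hyP) hCdiam)
    -- closed ball of radius r lies in P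
    have hrle : r ≤ Metric.infDist s Pᶜ := by
      rw [hydist]; exact Metric.infDist_le_dist_of_mem hyfr
    have hball : Metric.closedBall s r ⊆ P := by
      refine Set.Subset.trans (Metric.closedBall_subset_closedBall hrle) ?_
      refine Set.Subset.trans (Metric.closedBall_infDist_compl_subset_closure hsP) ?_
      rw [hPclosed.closure_eq]
    -- the test point
    set s' := s + (r / ‖g‖) • g with hs'
    have hgnorm : (0:ℝ) < ‖g‖ := norm_pos_iff.2 hg0
    have hnorm : ‖s' - s‖ = r := by
      rw [hs', add_sub_cancel_left, norm_smul, norm_div, Real.norm_eq_abs,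
        abs_of_pos hrpos, Real.norm_eq_abs, abs_of_pos hgnorm]
      field_simp
    have hs'P : s' ∈ P := hball (by
      rw [Metric.mem_closedBall, dist_eq_norm, hnorm])
    have hne : s ≠ s' := by
      intro h
      rw [← h] at hnorm
      simp at hnorm
      exact hrpos.ne' hnorm.symm
    -- tangent inequality
    have htan : (inner ℝ g (s' - s) : ℝ) ≤ G s' - G s :=
      aux_tangent_le hconv hsP hs'P hdiff.hasGradientAt
    have hinner : (inner ℝ g (s' - s) : ℝ) = r * ‖g‖ := by
      rw [hs', add_sub_cancel_left, real_inner_smul_right, real_inner_self_eq_norm_sq]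
      field_simp
    have hLLs := hLL s hsP s' hs'P hne
    have hns : ‖s - s'‖ = r := by rw [← hnorm, norm_sub_rev]
    rw [hns] at hLLs
    have hGle : G s' - G s ≤ C * r * Real.log (C / r) := by
      calc G s' - G s ≤ |G s' - G s| := le_abs_self _
        _ = |G s - G s'| := abs_sub_comm _ _
        _ ≤ C * r * Real.log (C / r) := hLLs
    have : r * ‖g‖ ≤ C * r * Real.log (C / r) := by
      rw [← hinner]; exact htan.trans hGle
    refine le_of_mul_le_mul_left ?_ hrpos
    calc r * ‖g‖ ≤ C * r * Real.log (C / r) := this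
      _ = r * (C * Real.log (C / r)) := by ring
end

section
/- Let P ⊂ ℝⁿ be a compact convex set with nonempty interior and let G : int P → ℝ be a convex function, so that G is differentiable at Lebesgue-almost every point of int P. Suppose there is a constant C > 0 such that ‖∇G(s)‖ ≤ C · log(C / dist(s, ∂P)) for almost every s ∈ int P. Then there exists ε > 0 such that ∫_{int P} e^{ε‖∇G(s)‖} ds < +∞. -/
open MeasureTheory Filter Topology Pointwise

/-- Volume of the thin shell near the boundary of a convex body is linear in its width. -/
private lemma thin_shell_bound {n : ℕ} {P : Set (EuclideanSpace ℝ (Fin n))}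
    (hPc : IsCompact P) (hPconv : Convex ℝ P)
    {x₀ : EuclideanSpace ℝ (Fin n)} {ρ : ℝ} (hρ : 0 < ρ)
    (hball : Metric.closedBall x₀ ρ ⊆ P)
    (hfr : (frontier P).Nonempty)
    {r : ℝ} (hr : 0 < r) :
    volume {s | s ∈ interior P ∧ Metric.infDist s (frontier P) < r}
      ≤ ENNReal.ofReal ((((n : ℝ) + 1) * (volume P).toReal / ρ) * r) := by
  set V := (volume P).toReal with hVdef
  have hVfin : volume P ≠ ⊤ := hPc.measure_lt_top.ne
  have hVP : volume P = ENNReal.ofReal V := (ENNReal.ofReal_toReal hVfin).symm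
  have hV0 : 0 ≤ V := ENNReal.toReal_nonneg
  rcases le_or_gt ρ r with hrρ | hrρ
  · calc volume {s | s ∈ interior P ∧ Metric.infDist s (frontier P) < r}
        ≤ volume P := measure_mono (fun s hs => interior_subset hs.1)
      _ = ENNReal.ofReal V := hVP
      _ ≤ _ := by
          apply ENNReal.ofReal_le_ofReal
          have hq : (1:ℝ) ≤ r / ρ := (one_le_div hρ).2 hrρ
          have h1 : ((n:ℝ) + 1) * V / ρ * r = ((n:ℝ) + 1) * V * (r / ρ) := by ring
          rw [h1]
          calc V ≤ ((n:ℝ) + 1) * V := le_mul_of_one_le_left hV0 (by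
              have : (0:ℝ) ≤ (n:ℝ) := Nat.cast_nonneg n
              linarith)
            _ ≤ ((n:ℝ) + 1) * V * (r / ρ) := le_mul_of_one_le_right (by positivity) hq
  · set t := r / ρ with htdef
    have ht0 : 0 < t := div_pos hr hρ
    have ht1 : t < 1 := (div_lt_one hρ).2 hrρ
    set c := 1 - t with hcdef
    have hc0 : 0 < c := by simp only [hcdef]; linarith
    set φ : EuclideanSpace ℝ (Fin n) → EuclideanSpace ℝ (Fin n) :=
      fun y => x₀ + c • (y - x₀) with hφdef
    set H := φ '' P with hHdef
    have key : ∀ y ∈ H, Metric.closedBall y r ⊆ P := by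
      rintro y ⟨p, hp, rfl⟩ z hz
      have hq : x₀ + t⁻¹ • (z - φ p) ∈ P := by
        apply hball
        rw [Metric.mem_closedBall, dist_eq_norm]
        have h1 : x₀ + t⁻¹ • (z - φ p) - x₀ = t⁻¹ • (z - φ p) := by abel
        rw [h1, norm_smul, Real.norm_eq_abs, abs_of_pos (by positivity)]
        rw [Metric.mem_closedBall, dist_eq_norm] at hz
        calc t⁻¹ * ‖z - φ p‖ ≤ t⁻¹ * r := by
              exact mul_le_mul_of_nonneg_left hz (by positivity)
          _ = ρ := by rw [htdef]; field_simp
      have hzeq : z = c • p + t • (x₀ + t⁻¹ • (z - φ p)) := by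
        have htne : t ≠ 0 := ne_of_gt ht0
        simp only [hφdef, hcdef]
        match_scalars <;> field_simp <;> ring
      rw [hzeq]
      exact hPconv hp hq hc0.le ht0.le (by simp [hcdef])
    have hHsub : ∀ y ∈ H, y ∈ interior P ∧ r ≤ Metric.infDist y (frontier P) := by
      intro y hy
      have hb : Metric.ball y r ⊆ interior P :=
        interior_maximal (Metric.ball_subset_closedBall.trans (key y hy)) Metric.isOpen_ball
      refine ⟨hb (Metric.mem_ball_self hr), ?_⟩
      by_contra hlt
      push_neg at hlt
      obtain ⟨z, hzf, hzd⟩ := (Metric.infDist_lt_iff hfr).1 hlt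
      have hzi : z ∈ interior P := hb (by rw [Metric.mem_ball, dist_comm]; exact hzd)
      exact hzf.2 hzi
    have hcont : Continuous φ := by
      simp only [hφdef]; fun_prop
    have hHvol : volume H = ENNReal.ofReal (c ^ n * V) := by
      have h1 : H = (fun y => (t • x₀) +ᵥ (c • y)) '' P := by
        apply Set.image_congr'
        intro y
        simp only [hφdef, vadd_eq_add, hcdef]
        module
      rw [h1, ← Set.image_image (fun z => (t • x₀) +ᵥ z) (fun y => c • y),
        Set.image_smul, Set.image_vadd, measure_vadd, Measure.addHaar_smul,
        finrank_euclideanSpace_fin, abs_of_pos (pow_pos hc0 n), hVP,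
        ← ENNReal.ofReal_mul (by positivity)]
    have hHP : H ⊆ P := fun y hy => interior_subset (hHsub y hy).1
    have hHm : NullMeasurableSet H volume :=
      ((hPc.image hcont).isClosed.measurableSet).nullMeasurableSet
    have hsub2 : {s | s ∈ interior P ∧ Metric.infDist s (frontier P) < r} ⊆ P \ H := by
      rintro s ⟨hs1, hs2⟩
      exact ⟨interior_subset hs1, fun hsH => absurd hs2 (not_lt.2 (hHsub s hsH).2)⟩
    calc volume {s | s ∈ interior P ∧ Metric.infDist s (frontier P) < r}
        ≤ volume (P \ H) := measure_mono hsub2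
      _ = volume P - volume H := measure_diff hHP hHm (by
          rw [hHvol]; exact ENNReal.ofReal_ne_top)
      _ = ENNReal.ofReal V - ENNReal.ofReal (c ^ n * V) := by rw [hVP, hHvol]
      _ = ENNReal.ofReal (V - c ^ n * V) := (ENNReal.ofReal_sub V (by positivity)).symm
      _ ≤ ENNReal.ofReal ((((n:ℝ) + 1) * V / ρ) * r) := by
          apply ENNReal.ofReal_le_ofReal
          have hber : 1 - (n:ℝ) * t ≤ c ^ n := by
            have h := one_add_mul_le_pow (a := -t) (by linarith) n
            have h2 : 1 + (n:ℝ) * (-t) = 1 - (n:ℝ) * t := by ring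
            rw [h2] at h
            simpa [hcdef, sub_eq_add_neg] using h
          have h3 : ((n:ℝ) + 1) * V / ρ * r = V * (((n:ℝ) + 1) * t) := by
            rw [htdef]; field_simp
          rw [h3]
          have hn0 : (0:ℝ) ≤ (n:ℝ) := Nat.cast_nonneg n
          nlinarith [mul_nonneg hV0 ht0.le, mul_nonneg (mul_nonneg hn0 hV0) ht0.le]

/-- Let `P ⊂ ℝⁿ` be compact convex with nonempty interior and
`G : int P → ℝ` convex. If there is `C > 0` such that
`‖∇G(s)‖ ≤ C log(C / dist(s, ∂P))` for almost every `s ∈ int P`, then there is `ε > 0`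
with `∫_{int P} e^{ε ‖∇G(s)‖} ds < +∞`. -/
theorem gradient_log_bound_implies_exp_integrable
    (n : ℕ) (P : Set (EuclideanSpace ℝ (Fin n)))
    (hPc : IsCompact P) (hPconv : Convex ℝ P) (hPint : (interior P).Nonempty)
    (G : EuclideanSpace ℝ (Fin n) → ℝ) (hconv : ConvexOn ℝ (interior P) G)
    (C : ℝ) (hC : 0 < C)
    (hbound : ∀ᵐ s ∂(volume.restrict (interior P)),
      ‖gradient G s‖ ≤ C * Real.log (C / Metric.infDist s (frontier P))) :
    ∃ ε > (0:ℝ),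
      ∫⁻ s in interior P, ENNReal.ofReal (Real.exp (ε * ‖gradient G s‖)) ∂volume < ⊤ := by
  obtain ⟨x₀, hx₀⟩ := hPint
  obtain ⟨ρ', hρ', hballs⟩ := Metric.isOpen_iff.1 isOpen_interior x₀ hx₀
  set ρ := ρ' / 2 with hρdef
  have hρ : 0 < ρ := by positivity
  have hball : Metric.closedBall x₀ ρ ⊆ P :=
    (Metric.closedBall_subset_ball (by simp only [hρdef]; linarith)).trans
      (hballs.trans interior_subset)
  have hε : (0:ℝ) < 1 / (2 * C) := by positivity
  refine ⟨1 / (2 * C), hε, ?_⟩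
  set ε := 1 / (2 * C) with hεdef
  have hnormeq : (fun s => ‖gradient G s‖)
      = fun s => ‖fderiv ℝ G s‖ := funext fun s => LinearIsometryEquiv.norm_map _ _
  have gmeas : Measurable fun s => Real.exp (ε * ‖gradient G s‖) := by
    apply Real.measurable_exp.comp
    apply Measurable.const_mul
    show Measurable fun s => ‖gradient G s‖
    rw [hnormeq]
    exact (measurable_fderiv ℝ G).norm
  rcases Set.eq_empty_or_nonempty (frontier P) with hfr | hfr
  · have hb1 : ∀ᵐ s ∂(volume.restrict (interior P)),
        ENNReal.ofReal (Real.exp (ε * ‖gradient G s‖)) ≤ 1 := by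
      filter_upwards [hbound] with s hs
      rw [hfr] at hs
      simp only [Metric.infDist_empty, div_zero, Real.log_zero, mul_zero] at hs
      have h2 : ε * ‖gradient G s‖ ≤ ε * 0 := mul_le_mul_of_nonneg_left hs hε.le
      rw [mul_zero] at h2
      calc ENNReal.ofReal (Real.exp (ε * ‖gradient G s‖))
          ≤ ENNReal.ofReal (Real.exp 0) := ENNReal.ofReal_le_ofReal (Real.exp_le_exp.2 h2)
        _ = 1 := by simp
    calc ∫⁻ s in interior P, ENNReal.ofReal (Real.exp (ε * ‖gradient G s‖)) ∂volume
        ≤ ∫⁻ _s in interior P, 1 ∂volume := lintegral_mono_ae hb1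
      _ = volume (interior P) := by simp
      _ ≤ volume P := measure_mono interior_subset
      _ < ⊤ := hPc.measure_lt_top
  · set d := fun s => Metric.infDist s (frontier P) with hddef
    have hdpos : ∀ s ∈ interior P, 0 < d s := by
      intro s hs
      refine (isClosed_frontier.notMem_iff_infDist_pos hfr).1 ?_
      intro h
      exact h.2 hs
    have hae : ∀ᵐ s ∂(volume.restrict (interior P)),
        Real.exp (ε * ‖gradient G s‖) ≤ Real.sqrt (C / d s) := by
      filter_upwards [hbound, ae_restrict_mem isOpen_interior.measurableSet] with s hs hsm
      have hd := hdpos s hsm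
      have hx : 0 < C / d s := div_pos hC hd
      have h1 : ε * ‖gradient G s‖ ≤ Real.log (C / d s) * (1 / 2) := by
        have h2 := mul_le_mul_of_nonneg_left hs hε.le
        calc ε * ‖gradient G s‖ ≤ ε * (C * Real.log (C / d s)) := h2
          _ = Real.log (C / d s) * (1 / 2) := by
              rw [hεdef]; field_simp
      calc Real.exp (ε * ‖gradient G s‖)
          ≤ Real.exp (Real.log (C / d s) * (1 / 2)) := Real.exp_le_exp.2 h1
        _ = (C / d s) ^ ((1:ℝ) / 2) := (Real.rpow_def_of_pos hx _).symm
        _ = Real.sqrt (C / d s) := (Real.sqrt_eq_rpow _).symm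
    rw [lintegral_eq_lintegral_meas_lt _ (ae_of_all _ fun s => (Real.exp_pos _).le)
      gmeas.aemeasurable]
    have hsplit : Set.Ioi (0:ℝ) = Set.Ioc 0 1 ∪ Set.Ioi 1 :=
      (Set.Ioc_union_Ioi_eq_Ioi zero_le_one).symm
    rw [hsplit, lintegral_union measurableSet_Ioi (Set.Ioc_disjoint_Ioi le_rfl)]
    set L := ((n:ℝ) + 1) * (volume P).toReal / ρ with hLdef
    have hL0 : 0 ≤ L := by positivity
    have hpart1 : ∫⁻ t in Set.Ioc (0:ℝ) 1,
        (volume.restrict (interior P)) {a | t < Real.exp (ε * ‖gradient G a‖)} ≤ volume P := by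
      calc _ ≤ ∫⁻ _t in Set.Ioc (0:ℝ) 1, volume P := by
            apply setLIntegral_mono' measurableSet_Ioc
            intro t _
            calc (volume.restrict (interior P)) {a | t < Real.exp (ε * ‖gradient G a‖)}
                ≤ (volume.restrict (interior P)) Set.univ := measure_mono (Set.subset_univ _)
              _ = volume (interior P) := by simp
              _ ≤ volume P := measure_mono interior_subset
        _ = volume P * volume (Set.Ioc (0:ℝ) 1) := setLIntegral_const _ _
        _ = volume P := by simp [Real.volume_Ioc]
    have hpart2 : ∫⁻ t in Set.Ioi (1:ℝ),
        (volume.restrict (interior P)) {a | t < Real.exp (ε * ‖gradient G a‖)}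
        ≤ ENNReal.ofReal (L * C) * ∫⁻ t in Set.Ioi (1:ℝ), ENNReal.ofReal ((t ^ 2)⁻¹) := by
      rw [← lintegral_const_mul' _ _ ENNReal.ofReal_ne_top]
      apply setLIntegral_mono
        (measurable_const.mul ((measurable_id.pow_const 2).inv.ennreal_ofReal))
      intro u hu
      have hu1 : (1:ℝ) < u := hu
      have hu0 : (0:ℝ) < u := lt_trans one_pos hu1
      calc (volume.restrict (interior P)) {a | u < Real.exp (ε * ‖gradient G a‖)}
          ≤ (volume.restrict (interior P)) {a | u < Real.sqrt (C / d a)} := by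
            apply measure_mono_ae
            filter_upwards [hae] with s hs hmem
            exact lt_of_lt_of_le hmem hs
        _ = volume ({a | u < Real.sqrt (C / d a)} ∩ interior P) :=
            Measure.restrict_apply' isOpen_interior.measurableSet
        _ ≤ volume {s | s ∈ interior P ∧ Metric.infDist s (frontier P) < C / u ^ 2} := by
            apply measure_mono
            rintro s ⟨hs1, hs2⟩
            refine ⟨hs2, ?_⟩
            have hd := hdpos s hs2
            have h2 : u ^ 2 < C / d s := (Real.lt_sqrt hu0.le).1 hs1
            have h3 : d s * u ^ 2 < C := by
              have := (lt_div_iff₀ hd).1 h2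
              nlinarith
            exact (lt_div_iff₀ (by positivity)).2 (by nlinarith)
        _ ≤ ENNReal.ofReal (L * (C / u ^ 2)) :=
            thin_shell_bound hPc hPconv hρ hball hfr (by positivity)
        _ = ENNReal.ofReal (L * C) * ENNReal.ofReal ((u ^ 2)⁻¹) := by
            rw [← ENNReal.ofReal_mul (by positivity)]
            congr 1
            field_simp
    have hJ : ∫⁻ t in Set.Ioi (1:ℝ), ENNReal.ofReal ((t ^ 2)⁻¹) < ⊤ := by
      have hint : IntegrableOn (fun t : ℝ => t ^ (-2:ℝ)) (Set.Ioi 1) :=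
        integrableOn_Ioi_rpow_of_lt (by norm_num) one_pos
      have heq : ∫⁻ t in Set.Ioi (1:ℝ), ENNReal.ofReal ((t ^ 2)⁻¹)
          = ∫⁻ t in Set.Ioi (1:ℝ), ENNReal.ofReal (t ^ (-2:ℝ)) := by
        apply setLIntegral_congr_fun measurableSet_Ioi
        intro u hu
        have hu0 : (0:ℝ) < u := lt_trans one_pos hu
        beta_reduce
        congr 1
        rw [Real.rpow_neg hu0.le, show ((2:ℝ)) = ((2:ℕ):ℝ) by norm_num, Real.rpow_natCast]
      rw [heq]
      refine (hasFiniteIntegral_iff_ofReal ?_).1 hint.2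
      filter_upwards [ae_restrict_mem measurableSet_Ioi] with u hu
      exact Real.rpow_nonneg (le_of_lt (lt_trans one_pos hu)) _
    calc _ ≤ volume P + ENNReal.ofReal (L * C) *
          ∫⁻ t in Set.Ioi (1:ℝ), ENNReal.ofReal ((t ^ 2)⁻¹) := add_le_add hpart1 hpart2
      _ < ⊤ := ENNReal.add_lt_top.2 ⟨hPc.measure_lt_top,
          ENNReal.mul_lt_top ENNReal.ofReal_lt_top hJ⟩
end
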